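/- arXiv:2301.10457 — 7 statements merged into one kernel-verified Lean document; each statement's English description precedes it below -/
import Mathlib

section
/- On an infinite dihedral Coxeter system with simple roots β and γ, there are exactly two reflection orders on the set of positive roots, namely β ≺ s_β(γ) ≺ s_β s_γ(β) ≺ ⋯ ≺ s_γ s_β(γ) ≺ s_γ(β) ≺ γ and its reverse γ ≺ s_γ(β) ≺ ⋯ ≺ s_β(γ) ≺ β. In particular each has order type ω + ω*. -/
/-- The positive roots of the infinite dihedral group, realized in `ℝ²` with
simple roots `β = (1,0)` and `γ = (0,1)`: they are `(n+1)β + nγ` and `nβ + (n+1)γ`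
for `n ≥ 0`. -/
def DihPos : Set (ℝ × ℝ) :=
  {v | ∃ n : ℕ, v = ((n : ℝ) + 1, (n : ℝ)) ∨ v = ((n : ℝ), (n : ℝ) + 1)}

/-- The explicit total order
`β ≺ s_β(γ) ≺ s_β s_γ(β) ≺ ⋯ ≺ s_γ s_β(γ) ≺ s_γ(β) ≺ γ`, i.e.
`(1,0) ≺ (2,1) ≺ (3,2) ≺ ⋯ ≺ (2,3) ≺ (1,2) ≺ (0,1)`. -/
def DihOrd1 (x y : ℝ × ℝ) : Prop :=
  ∃ m n : ℕ,
    (x = ((m : ℝ) + 1, (m : ℝ)) ∧ y = ((n : ℝ) + 1, (n : ℝ)) ∧ m < n) ∨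
    (x = ((m : ℝ) + 1, (m : ℝ)) ∧ y = ((n : ℝ), (n : ℝ) + 1)) ∨
    (x = ((m : ℝ), (m : ℝ) + 1) ∧ y = ((n : ℝ), (n : ℝ) + 1) ∧ n < m)

namespace DihAux

def da (m : ℕ) : ℝ × ℝ := ((m : ℝ) + 1, (m : ℝ))
def db (n : ℕ) : ℝ × ℝ := ((n : ℝ), (n : ℝ) + 1)

lemma memA (m : ℕ) : da m ∈ DihPos := ⟨m, Or.inl rfl⟩
lemma memB (n : ℕ) : db n ∈ DihPos := ⟨n, Or.inr rfl⟩

lemma da_inj {m n : ℕ} (h : da m = da n) : m = n := by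
  have := congrArg Prod.snd h
  simp only [da] at this
  exact_mod_cast this

lemma db_inj {m n : ℕ} (h : db m = db n) : m = n := by
  have := congrArg Prod.fst h
  simp only [db] at this
  exact_mod_cast this

lemma da_ne_db {m n : ℕ} : da m ≠ db n := by
  intro h
  have h1 := congrArg Prod.fst h
  have h2 := congrArg Prod.snd h
  simp only [da, db] at h1 h2
  have h1' : m + 1 = n := by exact_mod_cast h1
  have h2' : m = n + 1 := by exact_mod_cast h2
  omega

lemma comboA (M j : ℕ) :
    ((2*(M:ℝ)+(j:ℝ)+2)/(2*(M:ℝ)+1)) • da M + (((j:ℝ)+1)/(2*(M:ℝ)+1)) • db M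
      = da (M+j+1) := by
  have hM : (2*(M:ℝ)+1) ≠ 0 := by positivity
  simp only [da, db, Prod.smul_mk, Prod.mk_add_mk, smul_eq_mul, Prod.mk.injEq]
  constructor <;> · push_cast; field_simp; ring

lemma comboB (M j : ℕ) :
    (((j:ℝ)+1)/(2*(M:ℝ)+1)) • da M + ((2*(M:ℝ)+(j:ℝ)+2)/(2*(M:ℝ)+1)) • db M
      = db (M+j+1) := by
  have hM : (2*(M:ℝ)+1) ≠ 0 := by positivity
  simp only [da, db, Prod.smul_mk, Prod.mk_add_mk, smul_eq_mul, Prod.mk.injEq]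
  constructor <;> · push_cast; field_simp; ring

lemma comboMid (m : ℕ) :
    ((2*(m:ℝ)+3)/(2*(m:ℝ)+2)) • da m + ((1:ℝ)/(2*(m:ℝ)+2)) • db (m+1)
      = da (m+1) := by
  have hm : (2*(m:ℝ)+2) ≠ 0 := by positivity
  simp only [da, db, Prod.smul_mk, Prod.mk_add_mk, smul_eq_mul, Prod.mk.injEq]
  constructor <;> · push_cast; field_simp; ring

section Rel

variable {r : ℝ × ℝ → ℝ × ℝ → Prop}

lemma between
    (hrefl : ∀ x ∈ DihPos, ∀ y ∈ DihPos, r x y →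
      ∀ k₁ k₂ : ℝ, 0 < k₁ → 0 < k₂ → k₁ • x + k₂ • y ∈ DihPos →
        r x (k₁ • x + k₂ • y) ∧ r (k₁ • x + k₂ • y) y)
    {x y z : ℝ × ℝ} (hx : x ∈ DihPos) (hy : y ∈ DihPos) (hz : z ∈ DihPos)
    (hxy : r x y) {k₁ k₂ : ℝ} (h₁ : 0 < k₁) (h₂ : 0 < k₂)
    (hc : k₁ • x + k₂ • y = z) : r x z ∧ r z y := by
  have h := hrefl x hx y hy hxy k₁ k₂ h₁ h₂ (by rw [hc]; exact hz)
  rwa [hc] at h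

lemma Qlem
    (hrefl : ∀ x ∈ DihPos, ∀ y ∈ DihPos, r x y →
      ∀ k₁ k₂ : ℝ, 0 < k₁ → 0 < k₂ → k₁ • x + k₂ • y ∈ DihPos →
        r x (k₁ • x + k₂ • y) ∧ r (k₁ • x + k₂ • y) y)
    (h0 : r (da 0) (db 0)) :
    ∀ m : ℕ, r (da m) (db m) ∧
      ∀ j : ℕ, r (da m) (da (m+j+1)) ∧ r (da (m+j+1)) (db m) ∧
               r (da m) (db (m+j+1)) ∧ r (db (m+j+1)) (db m) := by
  intro m
  induction m with
  | zero =>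
    refine ⟨h0, fun j => ?_⟩
    have h1 := between hrefl (memA 0) (memB 0) (memA (0+j+1)) h0
      (by positivity) (by positivity) (comboA 0 j)
    have h2 := between hrefl (memA 0) (memB 0) (memB (0+j+1)) h0
      (by positivity) (by positivity) (comboB 0 j)
    exact ⟨h1.1, h1.2, h2.1, h2.2⟩
  | succ m ih =>
    have hm1 : r (da (m+1)) (db (m+1)) :=
      (between hrefl (memA m) (memB (m+1)) (memA (m+1)) (ih.2 0).2.2.1
        (by positivity) (by positivity) (comboMid m)).2
    refine ⟨hm1, fun j => ?_⟩
    have h1 := between hrefl (memA (m+1)) (memB (m+1)) (memA (m+1+j+1)) hm1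
      (by positivity) (by positivity) (comboA (m+1) j)
    have h2 := between hrefl (memA (m+1)) (memB (m+1)) (memB (m+1+j+1)) hm1
      (by positivity) (by positivity) (comboB (m+1) j)
    exact ⟨h1.1, h1.2, h2.1, h2.2⟩

lemma tri : ∀ x ∈ DihPos, ∀ y ∈ DihPos, x = y ∨ DihOrd1 x y ∨ DihOrd1 y x := by
  rintro x ⟨m, hm | hm⟩ y ⟨n, hn | hn⟩ <;> subst hm <;> subst hn
  · rcases lt_trichotomy m n with h | rfl | h
    · exact Or.inr (Or.inl ⟨m, n, Or.inl ⟨rfl, rfl, h⟩⟩)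
    · exact Or.inl rfl
    · exact Or.inr (Or.inr ⟨n, m, Or.inl ⟨rfl, rfl, h⟩⟩)
  · exact Or.inr (Or.inl ⟨m, n, Or.inr (Or.inl ⟨rfl, rfl⟩)⟩)
  · exact Or.inr (Or.inr ⟨n, m, Or.inr (Or.inl ⟨rfl, rfl⟩)⟩)
  · rcases lt_trichotomy m n with h | rfl | h
    · exact Or.inr (Or.inr ⟨n, m, Or.inr (Or.inr ⟨rfl, rfl, h⟩)⟩)
    · exact Or.inl rfl
    · exact Or.inr (Or.inl ⟨m, n, Or.inr (Or.inr ⟨rfl, rfl, h⟩)⟩)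

lemma main_iff
    (hirr : ∀ x ∈ DihPos, ¬ r x x)
    (htrans : ∀ x ∈ DihPos, ∀ y ∈ DihPos, ∀ z ∈ DihPos, r x y → r y z → r x z)
    (hrefl : ∀ x ∈ DihPos, ∀ y ∈ DihPos, r x y →
      ∀ k₁ k₂ : ℝ, 0 < k₁ → 0 < k₂ → k₁ • x + k₂ • y ∈ DihPos →
        r x (k₁ • x + k₂ • y) ∧ r (k₁ • x + k₂ • y) y)
    (h0 : r (da 0) (db 0)) :
    ∀ x ∈ DihPos, ∀ y ∈ DihPos, (r x y ↔ DihOrd1 x y) := by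
  have hQ := Qlem hrefl h0
  have haa : ∀ m n : ℕ, m < n → r (da m) (da n) := by
    intro m n h
    obtain ⟨j, rfl⟩ : ∃ j, n = m + j + 1 := ⟨n - m - 1, by omega⟩
    exact ((hQ m).2 j).1
  have hab : ∀ m n : ℕ, r (da m) (db n) := by
    intro m n
    rcases lt_trichotomy m n with h | rfl | h
    · obtain ⟨j, rfl⟩ : ∃ j, n = m + j + 1 := ⟨n - m - 1, by omega⟩
      exact ((hQ m).2 j).2.2.1
    · exact (hQ m).1
    · obtain ⟨j, rfl⟩ : ∃ j, m = n + j + 1 := ⟨m - n - 1, by omega⟩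
      exact ((hQ n).2 j).2.1
  have hbb : ∀ m n : ℕ, n < m → r (db m) (db n) := by
    intro m n h
    obtain ⟨j, rfl⟩ : ∃ j, m = n + j + 1 := ⟨m - n - 1, by omega⟩
    exact ((hQ n).2 j).2.2.2
  have hdr : ∀ x y, DihOrd1 x y → r x y := by
    rintro x y ⟨m, n, ⟨rfl, rfl, h⟩ | ⟨rfl, rfl⟩ | ⟨rfl, rfl, h⟩⟩
    · exact haa m n h
    · exact hab m n
    · exact hbb m n h
  intro x hx y hy
  refine ⟨fun hr => ?_, hdr x y⟩
  rcases tri x hx y hy with rfl | h | h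
  · exact absurd hr (hirr x hx)
  · exact h
  · exact absurd (htrans x hx y hy x hx hr (hdr y x h)) (hirr x hx)

end Rel

lemma ord_aa {m n : ℕ} : DihOrd1 (da m) (da n) ↔ m < n := by
  constructor
  · rintro ⟨m', n', ⟨h1, h2, h⟩ | ⟨h1, h2⟩ | ⟨h1, h2, h⟩⟩
    · rw [da_inj h1, da_inj h2]; exact h
    · exact absurd h2 da_ne_db
    · exact absurd h1 da_ne_db
  · exact fun h => ⟨m, n, Or.inl ⟨rfl, rfl, h⟩⟩

lemma ord_ab (m n : ℕ) : DihOrd1 (da m) (db n) := ⟨m, n, Or.inr (Or.inl ⟨rfl, rfl⟩)⟩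

lemma ord_ba {m n : ℕ} : ¬ DihOrd1 (db n) (da m) := by
  rintro ⟨m', n', ⟨h1, h2, h⟩ | ⟨h1, h2⟩ | ⟨h1, h2, h⟩⟩
  · exact da_ne_db h1.symm
  · exact da_ne_db h1.symm
  · exact da_ne_db h2

lemma ord_bb {m n : ℕ} : DihOrd1 (db m) (db n) ↔ n < m := by
  constructor
  · rintro ⟨m', n', ⟨h1, h2, h⟩ | ⟨h1, h2⟩ | ⟨h1, h2, h⟩⟩
    · exact absurd h1.symm da_ne_db
    · exact absurd h1.symm da_ne_db
    · rw [db_inj h1, db_inj h2]; exact h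
  · exact fun h => ⟨m, n, Or.inr (Or.inr ⟨rfl, rfl, h⟩)⟩

lemma buildF (r : ℝ × ℝ → ℝ × ℝ → Prop)
    (hord : ∀ x ∈ DihPos, ∀ y ∈ DihPos, (r x y ↔ DihOrd1 x y)) :
    ∃ f : DihPos ≃ (ℕ ⊕ₗ ℕᵒᵈ), ∀ x y : DihPos, r x.1 y.1 ↔ f x < f y := by
  let e : ℕ ⊕ₗ ℕᵒᵈ → DihPos := fun s =>
    Sum.elim (fun m : ℕ => (⟨da m, memA m⟩ : DihPos))
             (fun n : ℕᵒᵈ => (⟨db (OrderDual.ofDual n), memB _⟩ : DihPos)) (ofLex s)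
  have hbij : Function.Bijective e := by
    constructor
    · rintro (m | n) (m' | n') h
      · exact congrArg (toLex ∘ Sum.inl) (da_inj (congrArg Subtype.val h))
      · exact absurd (congrArg Subtype.val h) da_ne_db
      · exact absurd (congrArg Subtype.val h).symm da_ne_db
      · exact congrArg (toLex ∘ Sum.inr) (db_inj (congrArg Subtype.val h))
    · rintro ⟨v, n, h | h⟩
      · exact ⟨toLex (Sum.inl n), Subtype.ext h.symm⟩
      · exact ⟨toLex (Sum.inr (OrderDual.toDual n)), Subtype.ext h.symm⟩
  have hcmp : ∀ u v : ℕ ⊕ₗ ℕᵒᵈ, (r (e u).1 (e v).1 ↔ u < v) := by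
    rintro (m | n) (m' | n')
    · show r (da m) (da m') ↔ _
      rw [hord _ (memA m) _ (memA m'), ord_aa]
      exact (Sum.Lex.inl_lt_inl_iff).symm
    · show r (da m) (db _) ↔ _
      rw [hord _ (memA m) _ (memB _)]
      exact iff_of_true (ord_ab _ _) (Sum.Lex.inl_lt_inr _ _)
    · show r (db _) (da m') ↔ _
      rw [hord _ (memB _) _ (memA m')]
      exact iff_of_false ord_ba Sum.Lex.not_inr_lt_inl
    · show r (db _) (db _) ↔ _
      rw [hord _ (memB _) _ (memB _), ord_bb]
      exact (Sum.Lex.inr_lt_inr_iff (α := ℕ) (a := n) (b := n')).symm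
  set E := Equiv.ofBijective e hbij with hE
  refine ⟨E.symm, fun x y => ?_⟩
  have hx : e (E.symm x) = x := E.apply_symm_apply x
  have hy : e (E.symm y) = y := E.apply_symm_apply y
  have h := hcmp (E.symm x) (E.symm y)
  rwa [hx, hy] at h

lemma swap_mem {v : ℝ × ℝ} (hv : v ∈ DihPos) : v.swap ∈ DihPos := by
  obtain ⟨n, h | h⟩ := hv
  · exact ⟨n, Or.inr (by rw [h]; rfl)⟩
  · exact ⟨n, Or.inl (by rw [h]; rfl)⟩

lemma ord_swap {x y : ℝ × ℝ} (h : DihOrd1 x y) : DihOrd1 y.swap x.swap := by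
  obtain ⟨m, n, ⟨rfl, rfl, h⟩ | ⟨rfl, rfl⟩ | ⟨rfl, rfl, h⟩⟩ := h
  · exact ⟨n, m, Or.inr (Or.inr ⟨rfl, rfl, h⟩)⟩
  · exact ⟨n, m, Or.inr (Or.inl ⟨rfl, rfl⟩)⟩
  · exact ⟨n, m, Or.inl ⟨rfl, rfl, h⟩⟩

lemma swap_lin (k₁ k₂ : ℝ) (x y : ℝ × ℝ) :
    (k₁ • x + k₂ • y).swap = k₁ • x.swap + k₂ • y.swap := rfl

end DihAux

open DihAux

/-- On the infinite dihedral Coxeter system there are exactly two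
reflection orders on the positive roots — the explicit order `DihOrd1` and its
reverse — and in particular each has order type ω + ω*. -/
theorem stmt6 (r : ℝ × ℝ → ℝ × ℝ → Prop)
    (hirr : ∀ x ∈ DihPos, ¬ r x x)
    (htrans : ∀ x ∈ DihPos, ∀ y ∈ DihPos, ∀ z ∈ DihPos, r x y → r y z → r x z)
    (htot : ∀ x ∈ DihPos, ∀ y ∈ DihPos, x ≠ y → r x y ∨ r y x)
    (hrefl : ∀ x ∈ DihPos, ∀ y ∈ DihPos, r x y →
      ∀ k₁ k₂ : ℝ, 0 < k₁ → 0 < k₂ → k₁ • x + k₂ • y ∈ DihPos →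
        r x (k₁ • x + k₂ • y) ∧ r (k₁ • x + k₂ • y) y) :
    ((∀ x ∈ DihPos, ∀ y ∈ DihPos, (r x y ↔ DihOrd1 x y)) ∨
      (∀ x ∈ DihPos, ∀ y ∈ DihPos, (r x y ↔ DihOrd1 y x))) ∧
    ∃ f : DihPos ≃ (ℕ ⊕ₗ ℕᵒᵈ), ∀ x y : DihPos, r x.1 y.1 ↔ f x < f y := by
  rcases htot (da 0) (memA 0) (db 0) (memB 0) da_ne_db with h0 | h0
  · have hiff := main_iff hirr htrans hrefl h0
    exact ⟨Or.inl hiff, buildF r hiff⟩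
  · -- reversed case: work with the swapped relation
    set r' : ℝ × ℝ → ℝ × ℝ → Prop := fun u v => r u.swap v.swap with hr'
    have hirr' : ∀ x ∈ DihPos, ¬ r' x x := fun x hx => hirr x.swap (swap_mem hx)
    have htrans' : ∀ x ∈ DihPos, ∀ y ∈ DihPos, ∀ z ∈ DihPos, r' x y → r' y z → r' x z :=
      fun x hx y hy z hz h1 h2 =>
        htrans x.swap (swap_mem hx) y.swap (swap_mem hy) z.swap (swap_mem hz) h1 h2
    have hrefl' : ∀ x ∈ DihPos, ∀ y ∈ DihPos, r' x y →
        ∀ k₁ k₂ : ℝ, 0 < k₁ → 0 < k₂ → k₁ • x + k₂ • y ∈ DihPos →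
          r' x (k₁ • x + k₂ • y) ∧ r' (k₁ • x + k₂ • y) y := by
      intro x hx y hy hxy k₁ k₂ h₁ h₂ hmem
      have h := hrefl x.swap (swap_mem hx) y.swap (swap_mem hy) hxy k₁ k₂ h₁ h₂
        (by rw [← swap_lin]; exact swap_mem hmem)
      constructor
      · show r x.swap (k₁ • x + k₂ • y).swap
        rw [swap_lin]; exact h.1
      · show r (k₁ • x + k₂ • y).swap y.swap
        rw [swap_lin]; exact h.2
    have h0' : r' (da 0) (db 0) := h0
    have hiff' := main_iff hirr' htrans' hrefl' h0'
    have key : ∀ x ∈ DihPos, ∀ y ∈ DihPos, (r x y ↔ DihOrd1 y x) := by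
      intro x hx y hy
      have h1 : r x y ↔ r' x.swap y.swap := by
        show _ ↔ r x.swap.swap y.swap.swap
        rw [Prod.swap_swap, Prod.swap_swap]
      rw [h1, hiff' x.swap (swap_mem hx) y.swap (swap_mem hy)]
      constructor
      · intro h
        have := ord_swap h
        rwa [Prod.swap_swap, Prod.swap_swap] at this
      · exact ord_swap
    refine ⟨Or.inr key, ?_⟩
    obtain ⟨f', hf'⟩ := buildF r' hiff'
    let sE : DihPos ≃ DihPos :=
      ⟨fun v => ⟨v.1.swap, swap_mem v.2⟩, fun v => ⟨v.1.swap, swap_mem v.2⟩,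
        fun v => Subtype.ext (Prod.swap_swap _), fun v => Subtype.ext (Prod.swap_swap _)⟩
    refine ⟨sE.trans f', fun x y => ?_⟩
    have := hf' (sE x) (sE y)
    simp only [sE, Equiv.coe_fn_mk] at this
    rw [show r' x.1.swap y.1.swap = r x.1 y.1 by rw [hr']; simp] at this
    exact this
end

section
/- Let W be an irreducible affine Weyl group with finite root system Φ₀, and let ≺ be a reflection order on Φ⁺_W. For each α ∈ Φ₀, the restriction of ≺ to the infinite dihedral set {α₀ + nδ : n ≥ 0} ∪ {(−α)₀ + nδ : n ≥ 0} has order type ω + ω*: it is either α₀ ≺ α₀+δ ≺ α₀+2δ ≺ ⋯ ≺ (−α)₀+2δ ≺ (−α)₀+δ ≺ (−α)₀, or the analogous order with α and −α exchanged. -/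
variable {V : Type*} [AddCommGroup V] [Module ℝ V]

/-- `S` is closed in the root set `Γ`: any positive combination of two elements of `S`
that is again in `Γ` lies in `S`. -/
def IsClosedIn {W : Type*} [AddCommGroup W] [Module ℝ W] (Γ S : Set W) : Prop :=
  ∀ a ∈ S, ∀ b ∈ S, ∀ k₁ k₂ : ℝ, 0 < k₁ → 0 < k₂ →
    k₁ • a + k₂ • b ∈ Γ → k₁ • a + k₂ • b ∈ S

/-- `S ⊆ Γ` is biclosed in `Γ` if both `S` and `Γ \ S` are closed. -/
def IsBiclosedIn {W : Type*} [AddCommGroup W] [Module ℝ W] (Γ S : Set W) : Prop :=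
  S ⊆ Γ ∧ IsClosedIn Γ S ∧ IsClosedIn Γ (Γ \ S)

/-- The affine positive root system `Φ⁺_W = {α + nδ : α ∈ Φ₀⁺, n ≥ 0} ∪
{α + nδ : α ∈ Φ₀⁻, n > 0}`, realized in `V × ℝ` with `δ = (0,1)`. -/
def AffPos (Φ₀ Φpos : Set V) : Set (V × ℝ) :=
  {x | (∃ α ∈ Φpos, ∃ n : ℕ, x = (α, (n : ℝ))) ∨
       (∃ α ∈ Φ₀ \ Φpos, ∃ n : ℕ, x = (α, (n : ℝ) + 1))}

open Classical in
/-- The affine root `α₀ + nδ`, where `α₀ = α` if `α ∈ Φ₀⁺` and `α₀ = α + δ` otherwise. -/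
noncomputable def affRoot (Φpos : Set V) (α : V) (n : ℕ) : V × ℝ :=
  (α, (if α ∈ Φpos then (0 : ℝ) else 1) + n)

/-- `r` is a reflection order on `Φ⁺_W`: a (strict) total order on `Φ⁺_W` all of whose
initial intervals are biclosed in `Φ⁺_W`. -/
def IsReflOrder (Φ₀ Φpos : Set V) (r : V × ℝ → V × ℝ → Prop) : Prop :=
  (∀ x ∈ AffPos Φ₀ Φpos, ¬ r x x) ∧
  (∀ x ∈ AffPos Φ₀ Φpos, ∀ y ∈ AffPos Φ₀ Φpos, ∀ z ∈ AffPos Φ₀ Φpos,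
    r x y → r y z → r x z) ∧
  (∀ x ∈ AffPos Φ₀ Φpos, ∀ y ∈ AffPos Φ₀ Φpos, x ≠ y → r x y ∨ r y x) ∧
  (∀ S ⊆ AffPos Φ₀ Φpos,
    (∀ x ∈ S, ∀ y ∈ AffPos Φ₀ Φpos, r y x → y ∈ S) →
      IsBiclosedIn (AffPos Φ₀ Φpos) S)

set_option linter.unusedSectionVars false
set_option linter.unusedVariables false

namespace Stmt8Aux

variable {Φ₀ Φpos : Set V} {α : V}

lemma mem_affPos (hα : α ∈ Φ₀) (n : ℕ) : affRoot Φpos α n ∈ AffPos Φ₀ Φpos := by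
  by_cases h : α ∈ Φpos
  · exact Or.inl ⟨α, h, n, by simp [affRoot, h]⟩
  · exact Or.inr ⟨α, ⟨hα, h⟩, n, by simp [affRoot, h, add_comm]⟩

lemma affRoot_inj {m n : ℕ} (h : affRoot Φpos α m = affRoot Φpos α n) : m = n := by
  have h2 := congrArg Prod.snd h
  simp only [affRoot] at h2
  have h3 : (m : ℝ) = n := by linarith
  exact_mod_cast h3

lemma neg_mem (hΦ₀ : Φ₀ = Φpos ∪ (-Φpos)) (hα : α ∈ Φ₀) : -α ∈ Φ₀ := by
  rw [hΦ₀] at hα ⊢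
  rcases hα with h | h
  · exact Or.inr (by simpa using h)
  · exact Or.inl (by simpa using h)

lemma ne_zero (hΦ₀ : Φ₀ = Φpos ∪ (-Φpos)) (hposdisj : Disjoint Φpos (-Φpos))
    (hα : α ∈ Φ₀) : α ≠ 0 := by
  rintro rfl
  rw [hΦ₀] at hα
  have h0 : (0:V) ∈ Φpos := by
    rcases hα with h | h
    · exact h
    · simpa using h
  exact Set.disjoint_left.mp hposdisj h0 (by simpa using h0)

lemma affRoot_ne_neg (h0 : α ≠ 0) (m n : ℕ) :
    affRoot Φpos α m ≠ affRoot Φpos (-α) n := by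
  intro h
  have h1 : α = -α := congrArg Prod.fst h
  have h3 : α + α = 0 := by nth_rewrite 2 [h1]; exact add_neg_cancel α
  have h4 : (2:ℝ) • α = 0 := by rw [two_smul]; exact h3
  rcases smul_eq_zero.mp h4 with h5 | h5
  · norm_num at h5
  · exact h0 h5

open Classical in
lemma coeff_sum (hΦ₀ : Φ₀ = Φpos ∪ (-Φpos)) (hposdisj : Disjoint Φpos (-Φpos))
    (hα : α ∈ Φ₀) :
    (if α ∈ Φpos then (0:ℝ) else 1) + (if -α ∈ Φpos then (0:ℝ) else 1) = 1 := by
  by_cases h : α ∈ Φpos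
  · have h2 : -α ∉ Φpos := fun h2 => Set.disjoint_left.mp hposdisj h2 (by simpa using h)
    simp [h, h2]
  · have h2 : -α ∈ Φpos := by
      rw [hΦ₀] at hα
      rcases hα with h' | h'
      · exact absurd h' h
      · simpa using h'
    simp [h, h2]

lemma id_mid (γ : V) (k : ℕ) :
    ((1:ℝ)/2) • affRoot Φpos γ k + ((1:ℝ)/2) • affRoot Φpos γ (k+2)
      = affRoot Φpos γ (k+1) := by
  simp only [affRoot, Prod.smul_mk, Prod.mk_add_mk, Prod.mk.injEq]
  constructor
  · module
  · push_cast; simp only [smul_eq_mul]; ring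

open Classical in
lemma id2 (hab : (if α ∈ Φpos then (0:ℝ) else 1) + (if -α ∈ Φpos then (0:ℝ) else 1) = 1)
    (m n : ℕ) :
    (2:ℝ) • affRoot Φpos α m + (1:ℝ) • affRoot Φpos (-α) n
      = affRoot Φpos α (2*m+n+1) := by
  simp only [affRoot, Prod.smul_mk, Prod.mk_add_mk, Prod.mk.injEq]
  constructor
  · module
  · push_cast; simp only [smul_eq_mul]; linarith [hab]

open Classical in
lemma id3 (hab : (if α ∈ Φpos then (0:ℝ) else 1) + (if -α ∈ Φpos then (0:ℝ) else 1) = 1)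
    (m n : ℕ) :
    (1:ℝ) • affRoot Φpos α m + (2:ℝ) • affRoot Φpos (-α) n
      = affRoot Φpos (-α) (m+2*n+1) := by
  simp only [affRoot, Prod.smul_mk, Prod.mk_add_mk, Prod.mk.injEq]
  constructor
  · module
  · push_cast; simp only [smul_eq_mul]; linarith [hab]


set_option linter.unusedSectionVars false

lemma between {r : V × ℝ → V × ℝ → Prop} (hr : IsReflOrder Φ₀ Φpos r)
    {a b c : V × ℝ} (ha : a ∈ AffPos Φ₀ Φpos) (hb : b ∈ AffPos Φ₀ Φpos)
    (hc : c ∈ AffPos Φ₀ Φpos) {k₁ k₂ : ℝ} (hk₁ : 0 < k₁) (hk₂ : 0 < k₂)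
    (hcomb : k₁ • a + k₂ • b = c) (hca : c ≠ a) (hcb : c ≠ b) :
    (r a c ∧ r c b) ∨ (r b c ∧ r c a) := by
  obtain ⟨hirr, htr, htot, hbic⟩ := hr
  have notboth₁ : ¬ (r a c ∧ r b c) := by
    rintro ⟨h1, h2⟩
    have hS : IsBiclosedIn (AffPos Φ₀ Φpos) {y | y ∈ AffPos Φ₀ Φpos ∧ r y c} :=
      hbic _ (fun y hy => hy.1)
        (fun x hx y hy hyx => ⟨hy, htr y hy x hx.1 c hc hyx hx.2⟩)
    have hmem := hS.2.1 a ⟨ha, h1⟩ b ⟨hb, h2⟩ k₁ k₂ hk₁ hk₂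
      (by rw [hcomb]; exact hc)
    rw [hcomb] at hmem
    exact hirr c hc hmem.2
  have notboth₂ : ¬ (r c a ∧ r c b) := by
    rintro ⟨h1, h2⟩
    have hS : IsBiclosedIn (AffPos Φ₀ Φpos)
        {y | y ∈ AffPos Φ₀ Φpos ∧ (r y c ∨ y = c)} := by
      refine hbic _ (fun y hy => hy.1) ?_
      rintro x ⟨hx, hxc | rfl⟩ y hy hyx
      · exact ⟨hy, Or.inl (htr y hy x hx c hc hyx hxc)⟩
      · exact ⟨hy, Or.inl hyx⟩
    have haS : a ∈ AffPos Φ₀ Φpos \ {y | y ∈ AffPos Φ₀ Φpos ∧ (r y c ∨ y = c)} := by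
      refine ⟨ha, fun h => ?_⟩
      rcases h.2 with h' | rfl
      · exact hirr c hc (htr c hc a ha c hc h1 h')
      · exact hca rfl
    have hbS : b ∈ AffPos Φ₀ Φpos \ {y | y ∈ AffPos Φ₀ Φpos ∧ (r y c ∨ y = c)} := by
      refine ⟨hb, fun h => ?_⟩
      rcases h.2 with h' | rfl
      · exact hirr c hc (htr c hc b hb c hc h2 h')
      · exact hcb rfl
    have hmem := hS.2.2 a haS b hbS k₁ k₂ hk₁ hk₂ (by rw [hcomb]; exact hc)
    rw [hcomb] at hmem
    exact hmem.2 ⟨hc, Or.inr rfl⟩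
  rcases htot a ha c hc (fun h => hca h.symm) with h | h
  · rcases htot c hc b hb hcb with h' | h'
    · exact Or.inl ⟨h, h'⟩
    · exact absurd ⟨h, h'⟩ notboth₁
  · rcases htot b hb c hc (fun h => hcb h.symm) with h' | h'
    · exact Or.inr ⟨h', h⟩
    · exact absurd ⟨h, h'⟩ notboth₂

lemma buildEquiv {W : Type*} {r : W → W → Prop} {Γ : Set W}
    (hirr : ∀ x ∈ Γ, ¬ r x x)
    (htr : ∀ x ∈ Γ, ∀ y ∈ Γ, ∀ z ∈ Γ, r x y → r y z → r x z)
    (b c : ℕ → W) (hbΓ : ∀ n, b n ∈ Γ) (hcΓ : ∀ n, c n ∈ Γ)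
    (hbc : ∀ m n, r (b m) (c n))
    (hbinc : ∀ m n, m < n → r (b m) (b n))
    (hcdec : ∀ m n, m < n → r (c n) (c m))
    (S : Set W) (hS : ∀ x, x ∈ S ↔ ∃ n, x = b n ∨ x = c n) :
    ∃ f : S ≃ (ℕ ⊕ₗ ℕᵒᵈ), ∀ x y, r x.1 y.1 ↔ f x < f y := by
  classical
  have hbc_ne : ∀ m n, b m ≠ c n := fun m n h => hirr _ (hcΓ n) (h ▸ hbc m n)
  have hbinj : ∀ {m n : ℕ}, b m = b n → m = n := by
    intro m n h
    rcases lt_trichotomy m n with h' | h' | h'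
    · exact absurd (h ▸ hbinc m n h') (hirr _ (hbΓ n))
    · exact h'
    · exact absurd (h ▸ hbinc n m h') (hirr _ (hbΓ n))
  have hcinj : ∀ {m n : ℕ}, c m = c n → m = n := by
    intro m n h
    rcases lt_trichotomy m n with h' | h' | h'
    · exact absurd (h ▸ hcdec m n h') (hirr _ (hcΓ n))
    · exact h'
    · exact absurd (h ▸ hcdec n m h') (hirr _ (hcΓ n))
  set G : ℕ ⊕ ℕᵒᵈ → W := Sum.elim b (fun n => c (OrderDual.ofDual n)) with hG
  have hGS : ∀ s, G s ∈ S := by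
    rintro (n | n)
    · exact (hS _).2 ⟨n, Or.inl rfl⟩
    · exact (hS _).2 ⟨_, Or.inr rfl⟩
  have hGΓ : ∀ s, G s ∈ Γ := by rintro (n | n); exacts [hbΓ n, hcΓ _]
  set g : (ℕ ⊕ₗ ℕᵒᵈ) → S := fun u => ⟨G (ofLex u), hGS _⟩ with hg
  have hginj : Function.Injective g := by
    intro u v huv
    have h1 : G (ofLex u) = G (ofLex v) := congrArg Subtype.val huv
    apply ofLex.injective
    rcases hu : ofLex u with m | m <;> rcases hv : ofLex v with n | n <;>
      rw [hu, hv] at h1 <;> simp only [hG, Sum.elim_inl, Sum.elim_inr] at h1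
    · exact congrArg Sum.inl (hbinj h1)
    · exact absurd h1 (hbc_ne _ _)
    · exact absurd h1.symm (hbc_ne _ _)
    · exact congrArg Sum.inr (OrderDual.ofDual.injective (hcinj h1))
  have hgsurj : Function.Surjective g := by
    rintro ⟨x, hx⟩
    obtain ⟨n, h | h⟩ := (hS x).1 hx
    · exact ⟨toLex (Sum.inl n), Subtype.ext h.symm⟩
    · exact ⟨toLex (Sum.inr (OrderDual.toDual n)), Subtype.ext h.symm⟩
  have key : ∀ u v : ℕ ⊕ₗ ℕᵒᵈ, u < v → r (g u).1 (g v).1 := by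
    intro u v huv
    have huv' : Sum.Lex (· < ·) (· < ·) (ofLex u) (ofLex v) := huv
    rcases huv' with @⟨m, n, h⟩ | @⟨m, n, h⟩ | @⟨m, n⟩
    · exact hbinc m n h
    · exact hcdec (OrderDual.ofDual n) (OrderDual.ofDual m) h
    · exact hbc _ _
  have keyiff : ∀ u v : ℕ ⊕ₗ ℕᵒᵈ, r (g u).1 (g v).1 ↔ u < v := by
    intro u v
    refine ⟨fun h => ?_, key u v⟩
    rcases lt_trichotomy u v with h' | h' | h'
    · exact h'
    · subst h'
      exact absurd h (hirr _ (hGΓ _))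
    · exact absurd (htr _ (hGΓ _) _ (hGΓ _) _ (hGΓ _) h (key v u h'))
        (hirr _ (hGΓ _))
  refine ⟨(Equiv.ofBijective g ⟨hginj, hgsurj⟩).symm, fun x y => ?_⟩
  have hx := (Equiv.ofBijective g ⟨hginj, hgsurj⟩).apply_symm_apply x
  have hy := (Equiv.ofBijective g ⟨hginj, hgsurj⟩).apply_symm_apply y
  have := keyiff ((Equiv.ofBijective g ⟨hginj, hgsurj⟩).symm x)
    ((Equiv.ofBijective g ⟨hginj, hgsurj⟩).symm y)
  rw [show g ((Equiv.ofBijective g ⟨hginj, hgsurj⟩).symm x) = x from hx,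
      show g ((Equiv.ofBijective g ⟨hginj, hgsurj⟩).symm y) = y from hy] at this
  exact this

lemma core {Φ₀ Φpos : Set V} (hΦ₀ : Φ₀ = Φpos ∪ (-Φpos))
    (hposdisj : Disjoint Φpos (-Φpos))
    {r : V × ℝ → V × ℝ → Prop} (hr : IsReflOrder Φ₀ Φpos r)
    {α : V} (hα : α ∈ Φ₀)
    (h01 : r (affRoot Φpos α 0) (affRoot Φpos α 1)) :
    (∀ m n : ℕ, r (affRoot Φpos α m) (affRoot Φpos (-α) n)) ∧
    (∀ m n : ℕ, m < n → r (affRoot Φpos α m) (affRoot Φpos α n)) ∧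
    (∀ m n : ℕ, m < n → r (affRoot Φpos (-α) n) (affRoot Φpos (-α) m)) := by
  obtain ⟨hirr, htr, htot, hbic⟩ := id hr
  have hnegα : -α ∈ Φ₀ := neg_mem hΦ₀ hα
  have h0 : α ≠ 0 := ne_zero hΦ₀ hposdisj hα
  have hab := coeff_sum hΦ₀ hposdisj hα
  have mβ : ∀ n, affRoot Φpos α n ∈ AffPos Φ₀ Φpos := mem_affPos hα
  have mγ : ∀ n, affRoot Φpos (-α) n ∈ AffPos Φ₀ Φpos := mem_affPos hnegα
  have βne : ∀ {m n : ℕ}, m ≠ n → affRoot Φpos α m ≠ affRoot Φpos α n :=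
    fun h h' => h (affRoot_inj h')
  have γne : ∀ {m n : ℕ}, m ≠ n → affRoot Φpos (-α) m ≠ affRoot Φpos (-α) n :=
    fun h h' => h (affRoot_inj h')
  have βγne : ∀ m n, affRoot Φpos α m ≠ affRoot Φpos (-α) n := affRoot_ne_neg h0
  -- dichotomy at each consecutive triple, for β
  have betβ : ∀ k : ℕ,
      (r (affRoot Φpos α k) (affRoot Φpos α (k+1)) ∧
        r (affRoot Φpos α (k+1)) (affRoot Φpos α (k+2))) ∨
      (r (affRoot Φpos α (k+2)) (affRoot Φpos α (k+1)) ∧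
        r (affRoot Φpos α (k+1)) (affRoot Φpos α k)) := fun k =>
    between hr (mβ k) (mβ (k+2)) (mβ (k+1)) (by norm_num) (by norm_num)
      (id_mid α k) (βne (by omega)) (βne (by omega))
  have betγ : ∀ k : ℕ,
      (r (affRoot Φpos (-α) k) (affRoot Φpos (-α) (k+1)) ∧
        r (affRoot Φpos (-α) (k+1)) (affRoot Φpos (-α) (k+2))) ∨
      (r (affRoot Φpos (-α) (k+2)) (affRoot Φpos (-α) (k+1)) ∧
        r (affRoot Φpos (-α) (k+1)) (affRoot Φpos (-α) k)) := fun k =>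
    between hr (mγ k) (mγ (k+2)) (mγ (k+1)) (by norm_num) (by norm_num)
      (id_mid (-α) k) (γne (by omega)) (γne (by omega))
  have adj : ∀ k : ℕ, r (affRoot Φpos α k) (affRoot Φpos α (k+1)) := by
    intro k
    induction k with
    | zero => exact h01
    | succ k ih =>
      rcases betβ k with ⟨h1, h2⟩ | ⟨h1, h2⟩
      · exact h2
      · exact absurd (htr _ (mβ k) _ (mβ (k+1)) _ (mβ k) ih h2) (hirr _ (mβ k))
  have inc : ∀ m n : ℕ, m < n → r (affRoot Φpos α m) (affRoot Φpos α n) := by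
    intro m n h
    induction n with
    | zero => omega
    | succ n ih =>
      rcases Nat.lt_or_ge m n with h' | h'
      · exact htr _ (mβ m) _ (mβ n) _ (mβ (n+1)) (ih h') (adj n)
      · have hmn : m = n := by omega
        subst hmn
        exact adj m
  have cross : ∀ m n : ℕ, r (affRoot Φpos α m) (affRoot Φpos (-α) n) := by
    intro m n
    rcases between hr (mβ m) (mγ n) (mβ (2*m+n+1)) (by norm_num) (by norm_num)
        (id2 hab m n) (βne (by omega)) (βγne _ n) with ⟨h1, h2⟩ | ⟨h1, h2⟩
    · exact htr _ (mβ m) _ (mβ _) _ (mγ n) h1 h2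
    · exact absurd (htr _ (mβ m) _ (mβ _) _ (mβ m) (inc m (2*m+n+1) (by omega)) h2)
        (hirr _ (mβ m))
  have dec2 : ∀ n : ℕ, r (affRoot Φpos (-α) (2*n+1)) (affRoot Φpos (-α) n) := by
    intro n
    rcases between hr (mβ 0) (mγ n) (mγ (0+2*n+1)) (by norm_num) (by norm_num)
        (id3 hab 0 n) ((βγne 0 _).symm) (γne (by omega)) with ⟨h1, h2⟩ | ⟨h1, h2⟩
    · simpa using h2
    · exact absurd (htr _ (mβ 0) _ (mγ _) _ (mβ 0) (cross 0 (0+2*n+1)) h2)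
        (hirr _ (mβ 0))
  have adjγ : ∀ k : ℕ, r (affRoot Φpos (-α) (k+1)) (affRoot Φpos (-α) k) := by
    intro k
    induction k with
    | zero => simpa using dec2 0
    | succ k ih =>
      rcases betγ k with ⟨h1, h2⟩ | ⟨h1, h2⟩
      · exact absurd (htr _ (mγ k) _ (mγ (k+1)) _ (mγ k) h1 ih) (hirr _ (mγ k))
      · exact h1
  have dec : ∀ m n : ℕ, m < n → r (affRoot Φpos (-α) n) (affRoot Φpos (-α) m) := by
    intro m n h
    induction n with
    | zero => omega
    | succ n ih =>
      rcases Nat.lt_or_ge m n with h' | h'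
      · exact htr _ (mγ (n+1)) _ (mγ n) _ (mγ m) (adjγ n) (ih h')
      · have hmn : m = n := by omega
        subst hmn
        exact adjγ m
  exact ⟨cross, inc, dec⟩


end Stmt8Aux

open Stmt8Aux in
/-- For a reflection order `≺` on `Φ⁺_W` and `α ∈ Φ₀`, the restriction of
`≺` to `{α₀ + nδ} ∪ {(−α)₀ + nδ}` is either
`α₀ ≺ α₀+δ ≺ ⋯ ≺ (−α)₀+2δ ≺ (−α)₀+δ ≺ (−α)₀` or the analogue with `α, −α` exchanged;
in particular it has order type ω + ω*. -/
theorem stmt8 (Φ₀ Φpos : Set V) (hfin : Φ₀.Finite)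
    (hΦ₀ : Φ₀ = Φpos ∪ (-Φpos)) (hposdisj : Disjoint Φpos (-Φpos))
    (r : V × ℝ → V × ℝ → Prop) (hr : IsReflOrder Φ₀ Φpos r)
    (α : V) (hα : α ∈ Φ₀) :
    (((∀ m n : ℕ, r (affRoot Φpos α m) (affRoot Φpos (-α) n)) ∧
      (∀ m n : ℕ, m < n → r (affRoot Φpos α m) (affRoot Φpos α n)) ∧
      (∀ m n : ℕ, m < n → r (affRoot Φpos (-α) n) (affRoot Φpos (-α) m))) ∨
     ((∀ m n : ℕ, r (affRoot Φpos (-α) m) (affRoot Φpos α n)) ∧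
      (∀ m n : ℕ, m < n → r (affRoot Φpos (-α) m) (affRoot Φpos (-α) n)) ∧
      (∀ m n : ℕ, m < n → r (affRoot Φpos α n) (affRoot Φpos α m)))) ∧
    ∃ f : {x : V × ℝ | ∃ n : ℕ, x = affRoot Φpos α n ∨ x = affRoot Φpos (-α) n} ≃
        (ℕ ⊕ₗ ℕᵒᵈ), ∀ x y, r x.1 y.1 ↔ f x < f y := by
  obtain ⟨hirr, htr, htot, hbic⟩ := id hr
  have hnegα : -α ∈ Φ₀ := neg_mem hΦ₀ hα
  have h0 : α ≠ 0 := ne_zero hΦ₀ hposdisj hα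
  have hab := coeff_sum hΦ₀ hposdisj hα
  have mβ : ∀ n, affRoot Φpos α n ∈ AffPos Φ₀ Φpos := mem_affPos hα
  have mγ : ∀ n, affRoot Φpos (-α) n ∈ AffPos Φ₀ Φpos := mem_affPos hnegα
  have βne : ∀ {m n : ℕ}, m ≠ n → affRoot Φpos α m ≠ affRoot Φpos α n :=
    fun h h' => h (affRoot_inj h')
  have γne : ∀ {m n : ℕ}, m ≠ n → affRoot Φpos (-α) m ≠ affRoot Φpos (-α) n :=
    fun h h' => h (affRoot_inj h')
  have βγne : ∀ m n, affRoot Φpos α m ≠ affRoot Φpos (-α) n := affRoot_ne_neg h0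
  have main :
      (((∀ m n : ℕ, r (affRoot Φpos α m) (affRoot Φpos (-α) n)) ∧
        (∀ m n : ℕ, m < n → r (affRoot Φpos α m) (affRoot Φpos α n)) ∧
        (∀ m n : ℕ, m < n → r (affRoot Φpos (-α) n) (affRoot Φpos (-α) m))) ∨
      ((∀ m n : ℕ, r (affRoot Φpos (-α) m) (affRoot Φpos α n)) ∧
        (∀ m n : ℕ, m < n → r (affRoot Φpos (-α) m) (affRoot Φpos (-α) n)) ∧
        (∀ m n : ℕ, m < n → r (affRoot Φpos α n) (affRoot Φpos α m)))) := by
    rcases htot _ (mβ 0) _ (mβ 1) (βne (by omega)) with h | h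
    · exact Or.inl (core hΦ₀ hposdisj hr hα h)
    · rcases htot _ (mγ 0) _ (mγ 1) (γne (by omega)) with h' | h'
      · have hcore := core hΦ₀ hposdisj hr hnegα h'
        rw [neg_neg] at hcore
        exact Or.inr hcore
      · exfalso
        have hγβ : r (affRoot Φpos (-α) 0) (affRoot Φpos α 0) := by
          have hbet := between hr (mβ 0) (mγ 0) (mβ (2*0+0+1)) (by norm_num)
            (by norm_num) (id2 hab 0 0) (βne (by omega)) (βγne _ 0)
          norm_num at hbet
          rcases hbet with ⟨h1, h2⟩ | ⟨h1, h2⟩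
          · exact absurd (htr _ (mβ 0) _ (mβ 1) _ (mβ 0) h1 h) (hirr _ (mβ 0))
          · exact htr _ (mγ 0) _ (mβ 1) _ (mβ 0) h1 h2
        have hβγ : r (affRoot Φpos α 0) (affRoot Φpos (-α) 0) := by
          have hbet := between hr (mβ 0) (mγ 0) (mγ (0+2*0+1)) (by norm_num)
            (by norm_num) (id3 hab 0 0) ((βγne 0 _).symm) (γne (by omega))
          norm_num at hbet
          rcases hbet with ⟨h1, h2⟩ | ⟨h1, h2⟩
          · exact htr _ (mβ 0) _ (mγ 1) _ (mγ 0) h1 h2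
          · exact absurd (htr _ (mγ 0) _ (mγ 1) _ (mγ 0) h1 h') (hirr _ (mγ 0))
        exact hirr _ (mβ 0) (htr _ (mβ 0) _ (mγ 0) _ (mβ 0) hβγ hγβ)
  refine ⟨main, ?_⟩
  rcases main with ⟨c1, c2, c3⟩ | ⟨c1, c2, c3⟩
  · exact buildEquiv hirr htr _ _ mβ mγ c1 c2 c3 _ (fun x => Iff.rfl)
  · exact buildEquiv hirr htr _ _ mγ mβ c1 c2 c3 _
      (fun x => ⟨fun ⟨n, h⟩ => ⟨n, h.symm⟩, fun ⟨n, h⟩ => ⟨n, h.symm⟩⟩)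
end

section
/- Let W be an irreducible affine Weyl group with finite crystallographic root system Φ₀ and let ≺ be a reflection order on Φ⁺_W. Call α ∈ Φ₀ an initial root if the restriction of ≺ to {α₀+nδ : n ≥ 0} ∪ {(−α)₀+nδ : n ≥ 0} places all α₀+nδ before all (−α)₀+mδ. Then the set of initial roots is a positive system in Φ₀: it contains exactly one of {α, −α} for each α ∈ Φ₀, and is closed under root addition (if β, η are initial roots and β + η ∈ Φ₀, then β + η is an initial root). -/
variable {V : Type*} [AddCommGroup V] [Module ℝ V]

section Aux
set_option linter.unusedSectionVars false

open Classical in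
/-- Natural-number version of the height offset of a root. -/
noncomputable def neps (Φpos : Set V) (α : V) : ℕ := if α ∈ Φpos then 0 else 1

lemma st9_neps_le_one (Φpos : Set V) (α : V) : neps Φpos α ≤ 1 := by
  unfold neps; split <;> omega

lemma st9_affRoot_eq (Φpos : Set V) (α : V) (n : ℕ) :
    affRoot Φpos α n = (α, (neps Φpos α : ℝ) + (n : ℝ)) := by
  unfold affRoot neps
  by_cases h : α ∈ Φpos <;> simp [h]

variable {Φ₀ Φpos : Set V} {r : V × ℝ → V × ℝ → Prop}

lemma st9_zero_not_mem (hΦ₀ : Φ₀ = Φpos ∪ (-Φpos)) (hdisj : Disjoint Φpos (-Φpos)) :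
    (0 : V) ∉ Φ₀ := by
  rw [hΦ₀]
  rintro (h | h)
  · exact Set.disjoint_left.mp hdisj h (by simp only [Set.mem_neg, neg_zero]; exact h)
  · exact Set.disjoint_left.mp hdisj (by simpa using h) h

lemma neg_mem' (hΦ₀ : Φ₀ = Φpos ∪ (-Φpos)) {α : V} (hα : α ∈ Φ₀) : -α ∈ Φ₀ := by
  rw [hΦ₀] at hα ⊢
  rcases hα with h | h
  · right; simpa using h
  · left; simpa using h

lemma st9_neps_add (hΦ₀ : Φ₀ = Φpos ∪ (-Φpos)) (hdisj : Disjoint Φpos (-Φpos))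
    {α : V} (hα : α ∈ Φ₀) : neps Φpos α + neps Φpos (-α) = 1 := by
  unfold neps
  by_cases h : α ∈ Φpos
  · have h2 : -α ∉ Φpos := fun h2 => Set.disjoint_left.mp hdisj h2 (by simpa using h)
    simp [h, h2]
  · have h2 : -α ∈ Φpos := by
      rw [hΦ₀] at hα
      rcases hα with h' | h'
      · exact absurd h' h
      · simpa using h'
    simp [h, h2]

lemma st9_mem_affPos {α : V} (hα : α ∈ Φ₀) (n : ℕ) :
    affRoot Φpos α n ∈ AffPos Φ₀ Φpos := by
  by_cases h : α ∈ Φpos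
  · exact Or.inl ⟨α, h, n, by simp [affRoot, h]⟩
  · exact Or.inr ⟨α, ⟨hα, h⟩, n, by simp [affRoot, h, add_comm]⟩

lemma st9_affRoot_ne_of_ne {x y : V} (h : x ≠ y) (m n : ℕ) :
    affRoot Φpos x m ≠ affRoot Φpos y n := fun h' => h (congrArg Prod.fst h')

lemma st9_affRoot_ne_of_idx {α : V} {m n : ℕ} (h : m ≠ n) :
    affRoot Φpos α m ≠ affRoot Φpos α n := by
  intro h'
  apply h
  rw [st9_affRoot_eq Φpos α m, st9_affRoot_eq Φpos α n, Prod.mk.injEq] at h'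
  have := h'.2
  exact_mod_cast add_left_cancel this

lemma st9_ne_neg_self (hΦ₀ : Φ₀ = Φpos ∪ (-Φpos)) (hdisj : Disjoint Φpos (-Φpos))
    {α : V} (hα : α ∈ Φ₀) : α ≠ -α := by
  intro h
  have h0 : α + α = 0 := by nth_rewrite 2 [h]; abel
  have hz : α = 0 := by
    have h2 : (2 : ℝ) • α = 0 := by rw [two_smul]; exact h0
    calc α = ((2 : ℝ)⁻¹ * 2) • α := by norm_num
    _ = (2 : ℝ)⁻¹ • ((2 : ℝ) • α) := by rw [mul_smul]
    _ = 0 := by rw [h2, smul_zero]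
  exact st9_zero_not_mem hΦ₀ hdisj (hz ▸ hα)

/-- Strict initial interval (downset) of a pivot. -/
def Dset (Φ₀ Φpos : Set V) (r : V × ℝ → V × ℝ → Prop) (p : V × ℝ) : Set (V × ℝ) :=
  {w | w ∈ AffPos Φ₀ Φpos ∧ r w p}

lemma Dset_down (hr : IsReflOrder Φ₀ Φpos r) {p : V × ℝ} (hp : p ∈ AffPos Φ₀ Φpos) :
    ∀ w ∈ Dset Φ₀ Φpos r p, ∀ v ∈ AffPos Φ₀ Φpos, r v w → v ∈ Dset Φ₀ Φpos r p :=
  fun w hw v hv hvw => ⟨hv, hr.2.1 v hv w hw.1 p hp hvw hw.2⟩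

lemma Dset_biclosed (hr : IsReflOrder Φ₀ Φpos r) {p : V × ℝ} (hp : p ∈ AffPos Φ₀ Φpos) :
    IsBiclosedIn (AffPos Φ₀ Φpos) (Dset Φ₀ Φpos r p) :=
  hr.2.2.2 _ (fun _ h => h.1) (Dset_down hr hp)

lemma st9_sum_mem {S : Set (V × ℝ)} (hS : IsClosedIn (AffPos Φ₀ Φpos) S)
    {x y : V} (hxy : x + y ∈ Φ₀) (i j u : ℕ)
    (hid : neps Φpos x + neps Φpos y + i + j = neps Φpos (x + y) + u)
    (h1 : affRoot Φpos x i ∈ S) (h2 : affRoot Φpos y j ∈ S) :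
    affRoot Φpos (x + y) u ∈ S := by
  have hidR : ((neps Φpos x : ℝ) + i) + ((neps Φpos y : ℝ) + j)
      = (neps Φpos (x + y) : ℝ) + u := by
    have h := congrArg (fun n : ℕ => (n : ℝ)) hid
    push_cast at h
    linarith
  have key : (1 : ℝ) • affRoot Φpos x i + (1 : ℝ) • affRoot Φpos y j
      = affRoot Φpos (x + y) u := by
    simp only [st9_affRoot_eq, one_smul, Prod.mk_add_mk, Prod.mk.injEq]
    exact ⟨trivial, hidR⟩
  have hmem : (1 : ℝ) • affRoot Φpos x i + (1 : ℝ) • affRoot Φpos y j ∈ AffPos Φ₀ Φpos := by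
    rw [key]; exact st9_mem_affPos hxy u
  have h3 := hS _ h1 _ h2 1 1 one_pos one_pos hmem
  rwa [key] at h3

lemma st9_double_mem {S : Set (V × ℝ)} (hS : IsClosedIn (AffPos Φ₀ Φpos) S)
    (hΦ₀ : Φ₀ = Φpos ∪ (-Φpos)) (hdisj : Disjoint Φpos (-Φpos))
    {α : V} (hα : α ∈ Φ₀) (i j : ℕ)
    (h1 : affRoot Φpos α i ∈ S) (h2 : affRoot Φpos (-α) j ∈ S) :
    affRoot Φpos α (2 * i + j + 1) ∈ S := by
  have he : (neps Φpos α : ℝ) + (neps Φpos (-α) : ℝ) = 1 := by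
    exact_mod_cast st9_neps_add hΦ₀ hdisj hα
  have key : (2 : ℝ) • affRoot Φpos α i + (1 : ℝ) • affRoot Φpos (-α) j
      = affRoot Φpos α (2 * i + j + 1) := by
    simp only [st9_affRoot_eq, one_smul, Prod.smul_mk, smul_eq_mul, Prod.mk_add_mk, Prod.mk.injEq]
    constructor
    · rw [two_smul]; abel
    · push_cast; linarith
  have hmem : (2 : ℝ) • affRoot Φpos α i + (1 : ℝ) • affRoot Φpos (-α) j ∈ AffPos Φ₀ Φpos := by
    rw [key]; exact st9_mem_affPos hα _
  have h3 := hS _ h1 _ h2 2 1 two_pos one_pos hmem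
  rwa [key] at h3

lemma st9_convex_mem {S : Set (V × ℝ)} (hS : IsClosedIn (AffPos Φ₀ Φpos) S)
    {α : V} (hα : α ∈ Φ₀) {a b c : ℕ} (hab : a ≤ b) (hbc : b ≤ c)
    (h1 : affRoot Φpos α a ∈ S) (h2 : affRoot Φpos α c ∈ S) :
    affRoot Φpos α b ∈ S := by
  rcases eq_or_lt_of_le hab with h | hab'
  · rwa [h] at h1
  rcases eq_or_lt_of_le hbc with h | hbc'
  · rwa [← h] at h2
  have hac : a < c := lt_trans hab' hbc'
  have hca : (0 : ℝ) < (c : ℝ) - a := sub_pos.mpr (by exact_mod_cast hac)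
  have hne : (c : ℝ) - a ≠ 0 := ne_of_gt hca
  have hk₁ : 0 < ((c : ℝ) - b) / ((c : ℝ) - a) :=
    div_pos (sub_pos.mpr (by exact_mod_cast hbc')) hca
  have hk₂ : 0 < ((b : ℝ) - a) / ((c : ℝ) - a) :=
    div_pos (sub_pos.mpr (by exact_mod_cast hab')) hca
  have hsum : ((c : ℝ) - b) / ((c : ℝ) - a) + ((b : ℝ) - a) / ((c : ℝ) - a) = 1 := by
    field_simp
    ring
  have key : (((c : ℝ) - b) / ((c : ℝ) - a)) • affRoot Φpos α a
      + (((b : ℝ) - a) / ((c : ℝ) - a)) • affRoot Φpos α c = affRoot Φpos α b := by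
    simp only [st9_affRoot_eq, Prod.smul_mk, smul_eq_mul, Prod.mk_add_mk, Prod.mk.injEq]
    constructor
    · rw [← add_smul, hsum, one_smul]
    · field_simp
      ring
  have hmem : (((c : ℝ) - b) / ((c : ℝ) - a)) • affRoot Φpos α a
      + (((b : ℝ) - a) / ((c : ℝ) - a)) • affRoot Φpos α c ∈ AffPos Φ₀ Φpos := by
    rw [key]; exact st9_mem_affPos hα _
  have h3 := hS _ h1 _ h2 _ _ hk₁ hk₂ hmem
  rwa [key] at h3

lemma st9_tail_mem {S : Set (V × ℝ)} (hS : IsClosedIn (AffPos Φ₀ Φpos) S)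
    (hΦ₀ : Φ₀ = Φpos ∪ (-Φpos)) (hdisj : Disjoint Φpos (-Φpos))
    {α : V} (hα : α ∈ Φ₀) (i j u : ℕ) (hu : i ≤ u)
    (h1 : affRoot Φpos α i ∈ S) (h2 : affRoot Φpos (-α) j ∈ S) :
    affRoot Φpos α u ∈ S := by
  have big : ∀ N : ℕ, ∃ c, N ≤ c ∧ affRoot Φpos α c ∈ S := by
    intro N
    induction N with
    | zero => exact ⟨i, Nat.zero_le _, h1⟩
    | succ n ih =>
      obtain ⟨c, hc, hcS⟩ := ih
      exact ⟨2 * c + j + 1, by omega, st9_double_mem hS hΦ₀ hdisj hα c j hcS h2⟩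
  obtain ⟨c, hc, hcS⟩ := big u
  exact st9_convex_mem hS hα hu hc h1 hcS

lemma st9_prop1 (hΦ₀ : Φ₀ = Φpos ∪ (-Φpos)) {T : Set (V × ℝ)}
    (hTc : IsClosedIn (AffPos Φ₀ Φpos) T)
    (hTdown : ∀ w ∈ T, ∀ v ∈ AffPos Φ₀ Φpos, r v w → v ∈ T)
    {x y z : V} (hz : z ∈ Φ₀) (hsum : x + y + z = 0)
    (Hz : ∀ m n : ℕ, r (affRoot Φpos z m) (affRoot Φpos (-z) n))
    (hxT : ∀ i, affRoot Φpos x i ∈ T) (j : ℕ) (hyT : affRoot Φpos y j ∈ T) :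
    ∀ k, affRoot Φpos z k ∈ T := by
  intro k
  have hxyz : x + y = -z := by rw [eq_neg_iff_add_eq_zero]; exact hsum
  have b1 := st9_neps_le_one Φpos x
  have b2 := st9_neps_le_one Φpos y
  have b3 := st9_neps_le_one Φpos (-z)
  have hmem : x + y ∈ Φ₀ := by rw [hxyz]; exact neg_mem' hΦ₀ hz
  have hid : neps Φpos x + neps Φpos y
      + (neps Φpos (-z) + (j + k + 2) - (neps Φpos x + neps Φpos y + j)) + j
      = neps Φpos (x + y) + (j + k + 2) := by
    rw [hxyz]; omega
  have hsum' := st9_sum_mem hTc hmem _ _ _ hid (hxT _) hyT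
  rw [hxyz] at hsum'
  exact hTdown _ hsum' _ (st9_mem_affPos hz k) (Hz k (j + k + 2))

lemma st9_main_contra (hΦ₀ : Φ₀ = Φpos ∪ (-Φpos)) (hdisj : Disjoint Φpos (-Φpos))
    (hr : IsReflOrder Φ₀ Φpos r) {x y z : V}
    (hx : x ∈ Φ₀) (hy : y ∈ Φ₀) (hz : z ∈ Φ₀) (hsum : x + y + z = 0)
    (Hx : ∀ m n : ℕ, r (affRoot Φpos x m) (affRoot Φpos (-x) n))
    (Hy : ∀ m n : ℕ, r (affRoot Φpos y m) (affRoot Φpos (-y) n))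
    (Hz : ∀ m n : ℕ, r (affRoot Φpos z m) (affRoot Φpos (-z) n)) : False := by
  have irr := hr.1
  have htr := hr.2.1
  have h0 := st9_zero_not_mem hΦ₀ hdisj
  have hnx : -x ∈ Φ₀ := neg_mem' hΦ₀ hx
  have hynx : y ≠ -x := by
    intro h
    apply h0
    have hz0 : z = -(x + y) := by rw [eq_neg_iff_add_eq_zero, ← hsum]; abel
    rw [h] at hz0
    have : z = 0 := by rw [hz0]; simp
    exact this ▸ hz
  have hyzx : y + z = -x := by rw [eq_neg_iff_add_eq_zero, ← hsum]; abel
  have hyzmem : y + z ∈ Φ₀ := by rw [hyzx]; exact hnx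
  have hp : affRoot Φpos (-x) (neps Φpos y + neps Φpos z) ∈ AffPos Φ₀ Φpos :=
    st9_mem_affPos hnx _
  have hid0 : neps Φpos y + neps Φpos z + neps Φpos (-x) + 0
      = neps Φpos (y + z) + (neps Φpos y + neps Φpos z) := by
    rw [hyzx]; omega
  have bothin : ∀ q, q ∈ AffPos Φ₀ Φpos →
      (∀ i, affRoot Φpos x i ∈ Dset Φ₀ Φpos r q) →
      ((∃ j, affRoot Φpos y j ∈ Dset Φ₀ Φpos r q) ∨
        (∃ k, affRoot Φpos z k ∈ Dset Φ₀ Φpos r q)) →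
      (∀ j, affRoot Φpos y j ∈ Dset Φ₀ Φpos r q) ∧
        (∀ k, affRoot Φpos z k ∈ Dset Φ₀ Φpos r q) := by
    intro q hq hxT hseed
    have hTc := (Dset_biclosed hr hq).2.1
    have hTdown := Dset_down hr hq
    have hsum2 : x + z + y = 0 := by rw [← hsum]; abel
    rcases hseed with ⟨j, hj⟩ | ⟨k, hk⟩
    · have hzT := st9_prop1 hΦ₀ hTc hTdown hz hsum Hz hxT j hj
      have hyT := st9_prop1 hΦ₀ hTc hTdown hy hsum2 Hy hxT 0 (hzT 0)
      exact ⟨hyT, hzT⟩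
    · have hyT := st9_prop1 hΦ₀ hTc hTdown hy hsum2 Hy hxT k hk
      have hzT := st9_prop1 hΦ₀ hTc hTdown hz hsum Hz hxT 0 (hyT 0)
      exact ⟨hyT, hzT⟩
  by_cases hseedS :
      (∃ j, affRoot Φpos y j ∈ Dset Φ₀ Φpos r (affRoot Φpos (-x) (neps Φpos y + neps Φpos z))) ∨
      (∃ k, affRoot Φpos z k ∈ Dset Φ₀ Φpos r (affRoot Φpos (-x) (neps Φpos y + neps Φpos z)))
  · have hxS : ∀ i, affRoot Φpos x i ∈
        Dset Φ₀ Φpos r (affRoot Φpos (-x) (neps Φpos y + neps Φpos z)) :=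
      fun i => ⟨st9_mem_affPos hx i, Hx i _⟩
    obtain ⟨hyS, hzS⟩ := bothin _ hp hxS hseedS
    have hfin := st9_sum_mem ((Dset_biclosed hr hp).2.1) hyzmem _ _ _ hid0 (hyS _) (hzS 0)
    rw [hyzx] at hfin
    exact irr _ hp hfin.2
  · push_neg at hseedS
    obtain ⟨hyn, hzn⟩ := hseedS
    have hy0A := st9_mem_affPos (Φ₀ := Φ₀) (Φpos := Φpos) hy 0
    have hpy0 : r (affRoot Φpos (-x) (neps Φpos y + neps Φpos z)) (affRoot Φpos y 0) := by
      have hne : affRoot Φpos y 0 ≠ affRoot Φpos (-x) (neps Φpos y + neps Φpos z) :=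
        st9_affRoot_ne_of_ne hynx 0 _
      rcases hr.2.2.1 _ hy0A _ hp hne with h | h
      · exact absurd (⟨hy0A, h⟩ : affRoot Φpos y 0 ∈ Dset Φ₀ Φpos r (affRoot Φpos (-x) (neps Φpos y + neps Φpos z))) (hyn 0)
      · exact h
    have hxT : ∀ i, affRoot Φpos x i ∈ Dset Φ₀ Φpos r (affRoot Φpos y 0) :=
      fun i => ⟨st9_mem_affPos hx i,
        htr _ (st9_mem_affPos hx i) _ hp _ hy0A (Hx i _) hpy0⟩
    by_cases hseedT :
        (∃ j, affRoot Φpos y j ∈ Dset Φ₀ Φpos r (affRoot Φpos y 0)) ∨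
        (∃ k, affRoot Φpos z k ∈ Dset Φ₀ Φpos r (affRoot Φpos y 0))
    · obtain ⟨hyT, _⟩ := bothin _ hy0A hxT hseedT
      exact irr _ hy0A (hyT 0).2
    · push_neg at hseedT
      obtain ⟨hyn', hzn'⟩ := hseedT
      have hcc := (Dset_biclosed hr hy0A).2.2
      have hyc : ∀ j, affRoot Φpos y j ∈
          AffPos Φ₀ Φpos \ Dset Φ₀ Φpos r (affRoot Φpos y 0) :=
        fun j => ⟨st9_mem_affPos hy j, hyn' j⟩
      have hzc : ∀ k, affRoot Φpos z k ∈
          AffPos Φ₀ Φpos \ Dset Φ₀ Φpos r (affRoot Φpos y 0) :=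
        fun k => ⟨st9_mem_affPos hz k, hzn' k⟩
      have hfin := st9_sum_mem hcc hyzmem _ _ _ hid0 (hyc _) (hzc 0)
      rw [hyzx] at hfin
      exact hfin.2 ⟨hp, hpy0⟩

lemma st9_half (hΦ₀ : Φ₀ = Φpos ∪ (-Φpos)) (hdisj : Disjoint Φpos (-Φpos))
    (hr : IsReflOrder Φ₀ Φpos r) {γ : V} (hγ : γ ∈ Φ₀) (m n : ℕ)
    (h : r (affRoot Φpos (-γ) n) (affRoot Φpos γ m)) :
    (∀ j, ¬ r (affRoot Φpos γ j) (affRoot Φpos γ m)) ∨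
    (∀ j, r (affRoot Φpos (-γ) j) (affRoot Φpos γ m)) := by
  by_cases hA : ∃ i, r (affRoot Φpos γ i) (affRoot Φpos γ m)
  · right
    intro j
    by_contra hbj
    obtain ⟨i, hi⟩ := hA
    have hp := st9_mem_affPos (Φ₀ := Φ₀) (Φpos := Φpos) hγ m
    have hSc := (Dset_biclosed hr hp).2.1
    have hScc := (Dset_biclosed hr hp).2.2
    have t1 := st9_tail_mem hSc hΦ₀ hdisj hγ i n (max i m) (le_max_left i m)
      ⟨st9_mem_affPos hγ i, hi⟩ ⟨st9_mem_affPos (neg_mem' hΦ₀ hγ) n, h⟩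
    have t2 := st9_tail_mem hScc hΦ₀ hdisj hγ m j (max i m) (le_max_right i m)
      ⟨hp, fun hmem => hr.1 _ hp hmem.2⟩
      ⟨st9_mem_affPos (neg_mem' hΦ₀ hγ) j, fun hmem => hbj hmem.2⟩
    exact t2.2 t1
  · left
    push_neg at hA
    exact hA

lemma st9_casec (hΦ₀ : Φ₀ = Φpos ∪ (-Φpos)) (hdisj : Disjoint Φpos (-Φpos))
    (hr : IsReflOrder Φ₀ Φpos r) {γ : V} (hγ : γ ∈ Φ₀) (m₀ n₀ m₁ n₁ : ℕ)
    (h1 : r (affRoot Φpos (-γ) n₀) (affRoot Φpos γ m₀))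
    (h2 : r (affRoot Φpos γ n₁) (affRoot Φpos (-γ) m₁))
    (hc1 : ∀ j, r (affRoot Φpos (-γ) j) (affRoot Φpos γ m₀))
    (hc2 : ∀ j, ¬ r (affRoot Φpos (-γ) j) (affRoot Φpos (-γ) m₁)) : False := by
  have hnγ : -γ ∈ Φ₀ := neg_mem' hΦ₀ hγ
  have irr := hr.1
  have htr := hr.2.1
  have hA : r (affRoot Φpos γ n₁) (affRoot Φpos γ m₀) :=
    htr _ (st9_mem_affPos hγ n₁) _ (st9_mem_affPos hnγ m₁) _ (st9_mem_affPos hγ m₀) h2 (hc1 m₁)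
  have hpa := st9_mem_affPos (Φ₀ := Φ₀) (Φpos := Φpos) hγ m₀
  have hSc := (Dset_biclosed hr hpa).2.1
  have hm : m₀ < n₁ := by
    by_contra hcon
    push_neg at hcon
    have ht := st9_tail_mem hSc hΦ₀ hdisj hγ n₁ n₀ m₀ hcon
      ⟨st9_mem_affPos hγ n₁, hA⟩ ⟨st9_mem_affPos hnγ n₀, h1⟩
    exact irr _ hpa ht.2
  by_cases hmb : r (affRoot Φpos γ m₀) (affRoot Φpos (-γ) m₁)
  · exact irr _ (st9_mem_affPos hnγ m₁)
      (htr _ (st9_mem_affPos hnγ m₁) _ hpa _ (st9_mem_affPos hnγ m₁) (hc1 m₁) hmb)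
  · have hpb := st9_mem_affPos (Φ₀ := Φ₀) (Φpos := Φpos) hnγ m₁
    have hTcc := (Dset_biclosed hr hpb).2.2
    have tl := st9_tail_mem hTcc hΦ₀ hdisj hγ m₀ 0 n₁ hm.le
      ⟨hpa, fun hmem => hmb hmem.2⟩ ⟨st9_mem_affPos hnγ 0, fun hmem => hc2 0 hmem.2⟩
    exact tl.2 ⟨st9_mem_affPos hγ n₁, h2⟩

lemma st9_at_least_one (hΦ₀ : Φ₀ = Φpos ∪ (-Φpos)) (hdisj : Disjoint Φpos (-Φpos))
    (hr : IsReflOrder Φ₀ Φpos r) {α : V} (hα : α ∈ Φ₀)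
    (h1ex : ∃ n m, r (affRoot Φpos (-α) n) (affRoot Φpos α m))
    (h2ex : ∃ n m, r (affRoot Φpos α n) (affRoot Φpos (-α) m)) : False := by
  obtain ⟨n₀, m₀, h1⟩ := h1ex
  obtain ⟨n₁, m₁, h2⟩ := h2ex
  have hnα : -α ∈ Φ₀ := neg_mem' hΦ₀ hα
  have irr := hr.1
  have htr := hr.2.1
  have htot := hr.2.2.1
  have H1 := st9_half hΦ₀ hdisj hr hα m₀ n₀ h1
  have H2 := st9_half hΦ₀ hdisj hr hnα m₁ n₁ (by simpa using h2)
  simp only [neg_neg] at H2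
  rcases H1 with hL1 | hR1
  · rcases H2 with hL2 | hR2
    · -- both minima
      have s1 : r (affRoot Φpos (-α) n₀) (affRoot Φpos α n₁) := by
        rcases eq_or_ne m₀ n₁ with he | hne
        · rw [← he]; exact h1
        · rcases htot _ (st9_mem_affPos hα m₀) _ (st9_mem_affPos hα n₁)
            (st9_affRoot_ne_of_idx hne) with h | h
          · exact htr _ (st9_mem_affPos hnα n₀) _ (st9_mem_affPos hα m₀) _ (st9_mem_affPos hα n₁) h1 h
          · exact absurd h (hL1 n₁)
      have s2 : r (affRoot Φpos (-α) n₀) (affRoot Φpos (-α) m₁) :=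
        htr _ (st9_mem_affPos hnα n₀) _ (st9_mem_affPos hα n₁) _ (st9_mem_affPos hnα m₁) s1 h2
      rcases eq_or_ne m₁ n₀ with he | hne
      · rw [he] at s2; exact irr _ (st9_mem_affPos hnα n₀) s2
      · rcases htot _ (st9_mem_affPos hnα m₁) _ (st9_mem_affPos hnα n₀)
          (st9_affRoot_ne_of_idx hne) with h | h
        · exact irr _ (st9_mem_affPos hnα n₀)
            (htr _ (st9_mem_affPos hnα n₀) _ (st9_mem_affPos hnα m₁) _ (st9_mem_affPos hnα n₀) s2 h)
        · exact hL2 n₀ h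
    · exact st9_casec hΦ₀ hdisj hr hnα m₁ n₁ m₀ n₀ (by simpa using h2) (by simpa using h1)
        (by simpa using hR2) (by simpa using hL1)
  · rcases H2 with hL2 | hR2
    · exact st9_casec hΦ₀ hdisj hr hα m₀ n₀ m₁ n₁ h1 h2 hR1 hL2
    · exact irr _ (st9_mem_affPos hnα m₁)
        (htr _ (st9_mem_affPos hnα m₁) _ (st9_mem_affPos hα m₀) _ (st9_mem_affPos hnα m₁)
          (hR1 m₁) (hR2 m₀))

end Aux

/-- The set of initial roots of a reflection order `≺` on `Φ⁺_W`
(those `α ∈ Φ₀` with all `α₀ + nδ` preceding all `(−α)₀ + mδ`) is a positive system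
in `Φ₀`: it contains exactly one of each pair `{α, −α}` and is closed under root
addition. -/
theorem stmt9 (Φ₀ Φpos : Set V) (hfin : Φ₀.Finite)
    (hΦ₀ : Φ₀ = Φpos ∪ (-Φpos)) (hposdisj : Disjoint Φpos (-Φpos))
    (r : V × ℝ → V × ℝ → Prop) (hr : IsReflOrder Φ₀ Φpos r)
    (Ψ : Set V)
    (hΨ : Ψ = {α ∈ Φ₀ | ∀ m n : ℕ, r (affRoot Φpos α m) (affRoot Φpos (-α) n)}) :
    (∀ α ∈ Φ₀, Xor' (α ∈ Ψ) (-α ∈ Ψ)) ∧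
    (∀ β ∈ Ψ, ∀ η ∈ Ψ, β + η ∈ Φ₀ → β + η ∈ Ψ) := by
  subst hΨ
  have irr := hr.1
  have htr := hr.2.1
  have htot := hr.2.2.1
  have alo : ∀ α, α ∈ Φ₀ →
      (∀ m n : ℕ, r (affRoot Φpos α m) (affRoot Φpos (-α) n)) ∨
      (∀ m n : ℕ, r (affRoot Φpos (-α) m) (affRoot Φpos α n)) := by
    intro α hα
    by_contra hcon
    push_neg at hcon
    obtain ⟨⟨m₀, n₀, hP⟩, ⟨m₁, n₁, hQ⟩⟩ := hcon
    have hne := st9_ne_neg_self hΦ₀ hposdisj hα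
    have hnα : -α ∈ Φ₀ := neg_mem' hΦ₀ hα
    have h1 : r (affRoot Φpos (-α) n₀) (affRoot Φpos α m₀) := by
      rcases htot _ (st9_mem_affPos hα m₀) _ (st9_mem_affPos hnα n₀)
        (st9_affRoot_ne_of_ne hne m₀ n₀) with h | h
      · exact absurd h hP
      · exact h
    have h2 : r (affRoot Φpos α n₁) (affRoot Φpos (-α) m₁) := by
      rcases htot _ (st9_mem_affPos hnα m₁) _ (st9_mem_affPos hα n₁)
        (st9_affRoot_ne_of_ne (Ne.symm hne) m₁ n₁) with h | h
      · exact absurd h hQ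
      · exact h
    exact st9_at_least_one hΦ₀ hposdisj hr hα ⟨n₀, m₀, h1⟩ ⟨n₁, m₁, h2⟩
  constructor
  · intro α hα
    have hnα : -α ∈ Φ₀ := neg_mem' hΦ₀ hα
    rcases alo α hα with hP | hQ
    · left
      constructor
      · exact ⟨hα, hP⟩
      · rintro ⟨-, hQ'⟩
        have hQ'' : r (affRoot Φpos (-α) 0) (affRoot Φpos α 0) := by
          simpa using hQ' 0 0
        exact irr _ (st9_mem_affPos hα 0)
          (htr _ (st9_mem_affPos hα 0) _ (st9_mem_affPos hnα 0) _ (st9_mem_affPos hα 0) (hP 0 0) hQ'')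
    · right
      constructor
      · exact ⟨hnα, by simpa using hQ⟩
      · rintro ⟨-, hP'⟩
        exact irr _ (st9_mem_affPos hα 0)
          (htr _ (st9_mem_affPos hα 0) _ (st9_mem_affPos hnα 0) _ (st9_mem_affPos hα 0)
            (hP' 0 0) (hQ 0 0))
  · rintro β ⟨hβ₀, Hβ⟩ η ⟨hη₀, Hη⟩ hmemsum
    refine ⟨hmemsum, ?_⟩
    rcases alo (β + η) hmemsum with hP | hQ
    · exact hP
    · exfalso
      exact st9_main_contra hΦ₀ hposdisj hr hβ₀ hη₀ (neg_mem' hΦ₀ hmemsum)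
        (by abel) Hβ Hη (by simpa using hQ)
end

section
/- Let ≺ be a reflection order on the affine positive root system Φ⁺_W and let α be an initial root (i.e., α ∈ Ψ⁺_{W₀,≺}). Then there exists p ≥ 0 such that for all q ≥ p, the closed interval [(−α)₀+(q+1)δ, (−α)₀+qδ] with respect to ≺ is finite. -/
variable {V : Type*} [AddCommGroup V] [Module ℝ V]

-- AUX

lemma mem_affPos {Φ₀ Φpos : Set V} {γ : V} (hγ : γ ∈ Φ₀) (n : ℕ) :
    affRoot Φpos γ n ∈ AffPos Φ₀ Φpos := by
  by_cases h : γ ∈ Φpos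
  · exact Or.inl ⟨γ, h, n, by simp [affRoot, h]⟩
  · exact Or.inr ⟨γ, ⟨hγ, h⟩, n, by simp [affRoot, h, add_comm]⟩

lemma affRoot_snd_ne {Φpos : Set V} {γ : V} {n m : ℕ} (h : n ≠ m) :
    affRoot Φpos γ n ≠ affRoot Φpos γ m := by
  intro he
  have h2 := congrArg Prod.snd he
  simp only [affRoot] at h2
  exact h (Nat.cast_injective (add_left_cancel h2))

lemma exists_affRoot {Φ₀ Φpos : Set V} (hΦ₀ : Φ₀ = Φpos ∪ (-Φpos)) {z : V × ℝ}
    (hz : z ∈ AffPos Φ₀ Φpos) : ∃ γ ∈ Φ₀, ∃ n : ℕ, z = affRoot Φpos γ n := by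
  rcases hz with ⟨γ, hγ, n, rfl⟩ | ⟨γ, hγ, n, rfl⟩
  · exact ⟨γ, by rw [hΦ₀]; exact Or.inl hγ, n, by simp [affRoot, hγ]⟩
  · exact ⟨γ, hγ.1, n, by simp [affRoot, hγ.2, add_comm]⟩

lemma string_mono {Φ₀ Φpos : Set V} {r : V × ℝ → V × ℝ → Prop}
    (hr : IsReflOrder Φ₀ Φpos r) {γ : V} (hγ : γ ∈ Φ₀) :
    (∀ m n : ℕ, m < n → r (affRoot Φpos γ m) (affRoot Φpos γ n)) ∨
    (∀ m n : ℕ, m < n → r (affRoot Φpos γ n) (affRoot Φpos γ m)) := by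
  obtain ⟨hirr, htr, htot, hbcl⟩ := hr
  have memA : ∀ n : ℕ, affRoot Φpos γ n ∈ AffPos Φ₀ Φpos := mem_affPos hγ
  have asym : ∀ x y : V × ℝ, x ∈ AffPos Φ₀ Φpos → y ∈ AffPos Φ₀ Φpos →
      r x y → r y x → False := fun x y hx hy h1 h2 => hirr x hx (htr x hx y hy x hx h1 h2)
  have sum_eq : ∀ n : ℕ, (1/2 : ℝ) • affRoot Φpos γ n + (1/2 : ℝ) • affRoot Φpos γ (n+2)
      = affRoot Φpos γ (n+1) := by
    intro n
    simp only [affRoot, Prod.smul_mk, Prod.mk_add_mk, Prod.mk.injEq, smul_eq_mul]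
    constructor
    · module
    · push_cast; ring
  have step_up : ∀ n, r (affRoot Φpos γ n) (affRoot Φpos γ (n+1)) →
      r (affRoot Φpos γ (n+1)) (affRoot Φpos γ (n+2)) := by
    intro n h
    by_contra hc
    have h2 : r (affRoot Φpos γ (n+2)) (affRoot Φpos γ (n+1)) :=
      (htot _ (memA (n+1)) _ (memA (n+2)) (affRoot_snd_ne (by omega))).resolve_left hc
    have hbds : IsBiclosedIn (AffPos Φ₀ Φpos)
        {u | u ∈ AffPos Φ₀ Φpos ∧ r u (affRoot Φpos γ (n+1))} := by
      refine hbcl _ (fun u hu => hu.1) ?_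
      intro x hx y hy hyx
      exact ⟨hy, htr y hy x hx.1 _ (memA (n+1)) hyx hx.2⟩
    have hmem := hbds.2.1 _ ⟨memA n, h⟩ _ ⟨memA (n+2), h2⟩ (1/2) (1/2)
      (by norm_num) (by norm_num) (by rw [sum_eq]; exact memA (n+1))
    rw [sum_eq] at hmem
    exact hirr _ (memA (n+1)) hmem.2
  have step_down : ∀ n, r (affRoot Φpos γ (n+1)) (affRoot Φpos γ n) →
      r (affRoot Φpos γ (n+2)) (affRoot Φpos γ (n+1)) := by
    intro n h
    by_contra hc
    have h2 : r (affRoot Φpos γ (n+1)) (affRoot Φpos γ (n+2)) :=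
      (htot _ (memA (n+2)) _ (memA (n+1)) (affRoot_snd_ne (by omega))).resolve_left hc
    have hbds : IsBiclosedIn (AffPos Φ₀ Φpos)
        {u | u ∈ AffPos Φ₀ Φpos ∧ (r u (affRoot Φpos γ (n+1)) ∨ u = affRoot Φpos γ (n+1))} := by
      refine hbcl _ (fun u hu => hu.1) ?_
      intro x hx y hy hyx
      refine ⟨hy, Or.inl ?_⟩
      rcases hx.2 with h' | h'
      · exact htr y hy x hx.1 _ (memA (n+1)) hyx h'
      · rw [h'] at hyx; exact hyx
    have hnm : ∀ k, r (affRoot Φpos γ (n+1)) (affRoot Φpos γ k) → k ≠ n+1 →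
        affRoot Φpos γ k ∈ AffPos Φ₀ Φpos \
          {u | u ∈ AffPos Φ₀ Φpos ∧ (r u (affRoot Φpos γ (n+1)) ∨ u = affRoot Φpos γ (n+1))} := by
      intro k hk hkne
      refine ⟨memA k, fun hmem => ?_⟩
      rcases hmem.2 with h' | h'
      · exact asym _ _ (memA (n+1)) (memA k) hk h'
      · exact affRoot_snd_ne hkne h'
    have hmem := hbds.2.2 _ (hnm n h (by omega)) _ (hnm (n+2) h2 (by omega)) (1/2) (1/2)
      (by norm_num) (by norm_num) (by rw [sum_eq]; exact memA (n+1))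
    rw [sum_eq] at hmem
    exact hmem.2 ⟨memA (n+1), Or.inr rfl⟩
  rcases htot _ (memA 0) _ (memA 1) (affRoot_snd_ne (by omega)) with h01 | h01
  · left
    have hstep : ∀ n, r (affRoot Φpos γ n) (affRoot Φpos γ (n+1)) := by
      intro n
      induction n with
      | zero => exact h01
      | succ k ih => exact step_up k ih
    intro m n hlt
    induction n with
    | zero => omega
    | succ k ih =>
      rcases Nat.lt_succ_iff_lt_or_eq.mp hlt with h' | rfl
      · exact htr _ (memA m) _ (memA k) _ (memA (k+1)) (ih h') (hstep k)
      · exact hstep m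
  · right
    have hstep : ∀ n, r (affRoot Φpos γ (n+1)) (affRoot Φpos γ n) := by
      intro n
      induction n with
      | zero => exact h01
      | succ k ih => exact step_down k ih
    intro m n hlt
    induction n with
    | zero => omega
    | succ k ih =>
      rcases Nat.lt_succ_iff_lt_or_eq.mp hlt with h' | rfl
      · exact htr _ (memA (k+1)) _ (memA k) _ (memA m) (hstep k) (ih h')
      · exact hstep m

lemma b_dec {Φ₀ Φpos : Set V} {r : V × ℝ → V × ℝ → Prop}
    (hr : IsReflOrder Φ₀ Φpos r)
    (hΦ₀ : Φ₀ = Φpos ∪ (-Φpos)) (hposdisj : Disjoint Φpos (-Φpos))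
    {α : V} (hα : α ∈ Φ₀)
    (hinit : ∀ m n : ℕ, r (affRoot Φpos α m) (affRoot Φpos (-α) n)) :
    ∀ q q' : ℕ, q < q' → r (affRoot Φpos (-α) q') (affRoot Φpos (-α) q) := by
  have hna : -α ∈ Φ₀ := by
    rw [hΦ₀] at hα ⊢
    rcases hα with h | h
    · exact Or.inr (by simpa using h)
    · exact Or.inl (by simpa using h)
  have hxor : (α ∈ Φpos ∧ -α ∉ Φpos) ∨ (α ∉ Φpos ∧ -α ∈ Φpos) := by
    have h1 : α ∈ Φpos ∨ -α ∈ Φpos := by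
      rw [hΦ₀] at hα
      rcases hα with h | h
      · exact Or.inl h
      · exact Or.inr (by simpa using h)
    have h2 : ¬(α ∈ Φpos ∧ -α ∈ Φpos) := by
      rintro ⟨ha, hb⟩
      exact Set.disjoint_left.mp hposdisj ha (by simpa using hb)
    tauto
  intro q q' hlt
  obtain ⟨hirr, htr, htot, hbcl⟩ := hr
  have hS : IsBiclosedIn (AffPos Φ₀ Φpos)
      {u | u ∈ AffPos Φ₀ Φpos ∧ (r u (affRoot Φpos (-α) q) ∨ u = affRoot Φpos (-α) q)} := by
    refine hbcl _ (fun u hu => hu.1) ?_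
    intro x hx y hy hyx
    refine ⟨hy, Or.inl ?_⟩
    rcases hx.2 with h' | h'
    · exact htr y hy x hx.1 _ (mem_affPos hna q) hyx h'
    · rw [h'] at hyx; exact hyx
  set k₁ : ℝ := ((q' : ℝ) - q) / (q + 1) with hk
  have hq1 : (0:ℝ) < (q:ℝ) + 1 := by positivity
  have hk₁ : 0 < k₁ := by
    apply div_pos _ hq1
    have : (q:ℝ) < (q':ℝ) := by exact_mod_cast hlt
    linarith
  have key : k₁ • affRoot Φpos α 0 + (k₁ + 1) • affRoot Φpos (-α) q
      = affRoot Φpos (-α) q' := by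
    rcases hxor with ⟨h1, h2⟩ | ⟨h1, h2⟩ <;>
    · simp only [affRoot, if_pos, if_neg, h1, h2, if_true, if_false,
        Prod.smul_mk, Prod.mk_add_mk, Prod.mk.injEq, smul_eq_mul]
      constructor
      · module
      · rw [hk]; push_cast; field_simp; ring
  have hmem := hS.2.1 _ ⟨mem_affPos hα 0, Or.inl (hinit 0 q)⟩
    _ ⟨mem_affPos hna q, Or.inr rfl⟩ k₁ (k₁ + 1) hk₁ (by linarith)
    (by rw [key]; exact mem_affPos hna q')
  rw [key] at hmem
  rcases hmem.2 with h | h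
  · exact h
  · exact absurd h (affRoot_snd_ne (by omega))

/-- For a reflection order `≺` on `Φ⁺_W` and an initial root `α`
(all `α₀ + mδ` precede all `(−α)₀ + nδ`), there exists `p ≥ 0` such that for all
`q ≥ p` the closed interval `[(−α)₀ + (q+1)δ, (−α)₀ + qδ]` with respect to `≺`
is finite. -/
theorem stmt10 (Φ₀ Φpos : Set V) (hfin : Φ₀.Finite)
    (hΦ₀ : Φ₀ = Φpos ∪ (-Φpos)) (hposdisj : Disjoint Φpos (-Φpos))
    (r : V × ℝ → V × ℝ → Prop) (hr : IsReflOrder Φ₀ Φpos r)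
    (α : V) (hα : α ∈ Φ₀)
    (hinit : ∀ m n : ℕ, r (affRoot Φpos α m) (affRoot Φpos (-α) n)) :
    ∃ p : ℕ, ∀ q ≥ p,
      {z ∈ AffPos Φ₀ Φpos |
        (r (affRoot Φpos (-α) (q + 1)) z ∨ z = affRoot Φpos (-α) (q + 1)) ∧
        (r z (affRoot Φpos (-α) q) ∨ z = affRoot Φpos (-α) q)}.Finite := by
  classical
  have hirr := hr.1
  have htr := hr.2.1
  have hna : -α ∈ Φ₀ := by
    rw [hΦ₀] at hα ⊢
    rcases hα with h | h
    · exact Or.inr (by simpa using h)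
    · exact Or.inl (by simpa using h)
  have memA : ∀ γ : V, γ ∈ Φ₀ → ∀ n : ℕ, affRoot Φpos γ n ∈ AffPos Φ₀ Φpos :=
    fun γ h n => mem_affPos h n
  have asym : ∀ x y : V × ℝ, x ∈ AffPos Φ₀ Φpos → y ∈ AffPos Φ₀ Φpos →
      r x y → r y x → False := fun x y hx hy h1 h2 => hirr x hx (htr x hx y hy x hx h1 h2)
  have bdec := b_dec hr hΦ₀ hposdisj hα hinit
  have bweak : ∀ q q' : ℕ, q ≤ q' →
      r (affRoot Φpos (-α) q') (affRoot Φpos (-α) q) ∨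
        affRoot Φpos (-α) q' = affRoot Φpos (-α) q := by
    intro q q' h
    rcases eq_or_lt_of_le h with rfl | h
    · exact Or.inr rfl
    · exact Or.inl (bdec _ _ h)
  set N : V → ℕ → Set ℕ := fun γ q => {n |
      (r (affRoot Φpos (-α) (q + 1)) (affRoot Φpos γ n) ∨
        affRoot Φpos γ n = affRoot Φpos (-α) (q + 1)) ∧
      (r (affRoot Φpos γ n) (affRoot Φpos (-α) q) ∨
        affRoot Φpos γ n = affRoot Φpos (-α) q)} with hNdef
  have hgt : ∀ {γ : V} {q : ℕ}, (N γ q).Infinite → ∀ a : ℕ, ∃ m ∈ N γ q, a < m := by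
    intro γ q h a
    obtain ⟨m, hm⟩ := ((h.diff (Set.finite_le_nat a)).nonempty)
    exact ⟨m, hm.1, by simpa using hm.2⟩
  have key : ∀ γ, γ ∈ Φ₀ → ∀ q q' : ℕ, q < q' →
      (N γ q).Infinite → (N γ q').Infinite → False := by
    intro γ hγ q q' hlt hbad hbad'
    rcases string_mono hr hγ with hmon | hmon
    · -- increasing string
      have hγne : γ ≠ -α := by
        rintro rfl
        exact asym _ _ (memA _ hγ 0) (memA _ hγ 1) (hmon 0 1 (by omega)) (bdec 0 1 (by omega))
      have hall : ∀ n : ℕ, r (affRoot Φpos γ n) (affRoot Φpos (-α) q') := by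
        intro n
        obtain ⟨m, hmN, hmn⟩ := hgt hbad' n
        have h1 : r (affRoot Φpos γ n) (affRoot Φpos γ m) := hmon n m hmn
        rcases hmN.2 with h2 | h2
        · exact htr _ (memA _ hγ n) _ (memA _ hγ m) _ (memA _ hna q') h1 h2
        · rw [h2] at h1; exact h1
      obtain ⟨n₀, hn₀⟩ := hbad.nonempty
      have h3 : r (affRoot Φpos γ n₀) (affRoot Φpos (-α) (q + 1)) := by
        rcases bweak (q + 1) q' hlt with h | h
        · exact htr _ (memA _ hγ n₀) _ (memA _ hna q') _ (memA _ hna (q + 1)) (hall n₀) h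
        · rw [← h]; exact hall n₀
      rcases hn₀.1 with h4 | h4
      · exact asym _ _ (memA _ hna (q + 1)) (memA _ hγ n₀) h4 h3
      · exact hγne (congrArg Prod.fst h4)
    · -- decreasing string
      by_cases hγe : γ = -α
      · subst hγe
        obtain ⟨m, hmN, hmgt⟩ := hgt hbad (q + 1)
        rcases hmN.1 with h | h
        · exact asym _ _ (memA _ hna (q + 1)) (memA _ hna m) h (bdec (q + 1) m hmgt)
        · exact affRoot_snd_ne (by omega) h
      · have hall : ∀ n : ℕ, r (affRoot Φpos (-α) (q + 1)) (affRoot Φpos γ n) := by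
          intro n
          obtain ⟨m, hmN, hmn⟩ := hgt hbad n
          have h1 : r (affRoot Φpos γ m) (affRoot Φpos γ n) := hmon n m hmn
          rcases hmN.1 with h2 | h2
          · exact htr _ (memA _ hna (q + 1)) _ (memA _ hγ m) _ (memA _ hγ n) h2 h1
          · rw [h2] at h1; exact h1
        obtain ⟨n₀, hn₀⟩ := hbad'.nonempty
        have h4 : r (affRoot Φpos (-α) (q + 1)) (affRoot Φpos (-α) q') := by
          rcases hn₀.2 with h | h
          · exact htr _ (memA _ hna (q + 1)) _ (memA _ hγ n₀) _ (memA _ hna q') (hall n₀) h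
          · exact absurd (congrArg Prod.fst h) hγe
        rcases bweak (q + 1) q' hlt with h | h
        · exact asym _ _ (memA _ hna q') (memA _ hna (q + 1)) h h4
        · rw [h] at h4; exact hirr _ (memA _ hna (q + 1)) h4
  have hBfin : {q : ℕ | ∃ γ ∈ Φ₀, (N γ q).Infinite}.Finite := by
    have hsub : {q : ℕ | ∃ γ ∈ Φ₀, (N γ q).Infinite} ⊆
        ⋃ γ ∈ Φ₀, {q : ℕ | (N γ q).Infinite} := by
      rintro q ⟨γ, hγ, h⟩
      exact Set.mem_biUnion hγ h
    refine Set.Finite.subset (Set.Finite.biUnion hfin fun γ hγ => ?_) hsub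
    refine Set.Subsingleton.finite ?_
    intro q hq q' hq'
    rcases lt_trichotomy q q' with h | h | h
    · exact absurd (key γ hγ q q' h hq hq') not_false
    · exact h
    · exact absurd (key γ hγ q' q h hq' hq) not_false
  obtain ⟨m, hm⟩ := hBfin.bddAbove
  refine ⟨m + 1, fun q hq => ?_⟩
  have hnotbad : ∀ γ ∈ Φ₀, (N γ q).Finite := by
    intro γ hγ
    rw [← Set.not_infinite]
    intro h
    have : q ≤ m := hm ⟨γ, hγ, h⟩
    omega
  have hsub : {z ∈ AffPos Φ₀ Φpos |
      (r (affRoot Φpos (-α) (q + 1)) z ∨ z = affRoot Φpos (-α) (q + 1)) ∧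
      (r z (affRoot Φpos (-α) q) ∨ z = affRoot Φpos (-α) q)} ⊆
      ⋃ γ ∈ Φ₀, affRoot Φpos γ '' (N γ q) := by
    rintro z ⟨hz, hcond⟩
    obtain ⟨γ, hγ, n, rfl⟩ := exists_affRoot hΦ₀ hz
    exact Set.mem_biUnion hγ ⟨n, hcond, rfl⟩
  exact Set.Finite.subset
    (Set.Finite.biUnion hfin fun γ hγ => Set.Finite.image _ (hnotbad γ hγ)) hsub
end

section
/- Let Φ be a finite crystallographic root system of rank n with a fixed positive system Λ⁺ and simple system Δ. Consider a maximal chain of biclosed sets of the form Bᵢ = Λ⁺_{Δ_{i,1}, Δ_{i,2}} = (Λ⁺ \ Φ_{Δ_{i,1}}) ∪ Φ_{Δ_{i,2}}, i = 0,…,2n, where Δ_{0,1} = Δ, Δ_{0,2} = ∅, Δ_{2n,1} = ∅, Δ_{2n,2} = Δ, Δ_{i,1} and Δ_{i,2} are always orthogonal subsets of Δ, and at each step exactly one of the following happens: Δ_{i+1,1} = Δ_{i,1} minus one element (and Δ_{i+1,2} = Δ_{i,2}), or Δ_{i+1,2} = Δ_{i,2} plus one element (and Δ_{i+1,1} = Δ_{i,1}).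 Define the signature ε₀⋯ε_{2n−1} by εᵢ = 0 if |Δ_{i,1}| decreases at step i and εᵢ = 1 if |Δ_{i,2}| increases at step i. Then in every initial segment of length < 2n of the signature, the number of 1's is strictly less than the number of 0's; i.e., the signature is an extended Dyck word of length 2n. -/
private lemma cross_edge {ι : Type*} (G : SimpleGraph ι) (A : Set ι) {a b : ι}
    (w : G.Walk a b) (ha : a ∈ A) (hb : b ∉ A) :
    ∃ x y, G.Adj x y ∧ x ∈ A ∧ y ∉ A := by
  induction w with
  | nil => exact absurd ha hb
  | @cons u v c h p ih =>
    by_cases hv : v ∈ A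
    · exact ih hv hb
    · exact ⟨u, v, h, ha, hv⟩


/-- In a maximal admissible chain of biclosed sets
`Bᵢ = Λ⁺_{Δ_{i,1}, Δ_{i,2}}` over an irreducible (connected Dynkin diagram) root system
of rank `n` — encoded combinatorially by the pairs `(D1 i, D2 i)` of mutually
orthogonal (non-adjacent, disjoint) subsets of the `n` simple roots, with
`D1 0 = Δ, D2 0 = ∅, D1 (2n) = ∅, D2 (2n) = Δ`, where at step `i` either `D1`
loses one element (`ε i = 0`) or `D2` gains one element (`ε i = 1`) —
the signature `ε` is an extended Dyck word of length `2n`: every nonempty initial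
segment of length `< 2n` has strictly more `0`s than `1`s. -/
theorem stmt16 {ι : Type*} [Fintype ι] (G : SimpleGraph ι) (hconn : G.Connected)
    (n : ℕ) (hn : n = Fintype.card ι)
    (D1 D2 : ℕ → Finset ι) (ε : ℕ → Bool)
    (horth : ∀ i ≤ 2 * n, ∀ a ∈ D1 i, ∀ b ∈ D2 i, ¬ G.Adj a b)
    (hdisj : ∀ i ≤ 2 * n, Disjoint (D1 i) (D2 i))
    (h10 : D1 0 = Finset.univ) (h20 : D2 0 = ∅)
    (h1top : D1 (2 * n) = ∅) (h2top : D2 (2 * n) = Finset.univ)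
    (hstep : ∀ i < 2 * n,
      (ε i = false → D1 (i + 1) ⊆ D1 i ∧ (D1 (i + 1)).card + 1 = (D1 i).card ∧
        D2 (i + 1) = D2 i) ∧
      (ε i = true → D2 i ⊆ D2 (i + 1) ∧ (D2 i).card + 1 = (D2 (i + 1)).card ∧
        D1 (i + 1) = D1 i)) :
    ∀ k, 0 < k → k < 2 * n →
      ((Finset.range k).filter (fun i => ε i = true)).card <
        ((Finset.range k).filter (fun i => ε i = false)).card := by
  -- cardinal bookkeeping
  have key : ∀ i ≤ 2 * n,
      (D1 i).card + ((Finset.range i).filter (fun j => ε j = false)).card = n ∧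
      (D2 i).card = ((Finset.range i).filter (fun j => ε j = true)).card := by
    intro i hi
    induction i with
    | zero =>
      simp [h10, h20, hn]
    | succ i ih =>
      have hi' : i < 2 * n := Nat.lt_of_succ_le hi
      obtain ⟨c1, c2⟩ := ih (le_of_lt hi')
      obtain ⟨hf, ht⟩ := hstep i hi'
      cases hε : ε i with
      | false =>
        obtain ⟨_, hcard, h2eq⟩ := hf hε
        constructor
        · rw [Finset.range_add_one, Finset.filter_insert, if_pos hε,
            Finset.card_insert_of_notMem (by simp)]
          omega
        · rw [Finset.range_add_one, Finset.filter_insert, if_neg (by simp [hε]), h2eq, c2]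
      | true =>
        obtain ⟨_, hcard, h1eq⟩ := ht hε
        constructor
        · rw [Finset.range_add_one, Finset.filter_insert, if_neg (by simp [hε]), h1eq]
          exact c1
        · rw [Finset.range_add_one, Finset.filter_insert, if_pos hε,
            Finset.card_insert_of_notMem (by simp)]
          omega
  intro k hk0 hk2n
  classical
  by_contra hcon
  push_neg at hcon
  set T := ((Finset.range k).filter (fun j => ε j = true)).card with hT
  set F := ((Finset.range k).filter (fun j => ε j = false)).card with hF
  have hTF : T + F = k := by
    rw [hT, hF]
    have := Finset.card_filter_add_card_filter_not
      (s := Finset.range k) (p := fun j => ε j = true)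
    simpa [Finset.card_range] using this
  obtain ⟨c1, c2⟩ := key k (le_of_lt hk2n)
  have hle : (D1 k ∪ D2 k).card ≤ n := by
    rw [hn]
    exact Finset.card_le_univ _
  have hcardu : (D1 k ∪ D2 k).card = (D1 k).card + (D2 k).card :=
    Finset.card_union_of_disjoint (hdisj k (le_of_lt hk2n))
  -- So T ≤ F; combined with F ≤ T get equality and union = univ
  have hTeqF : T = F := by omega
  have hcardn : (D1 k ∪ D2 k).card = n := by omega
  have huniv : D1 k ∪ D2 k = Finset.univ := by
    apply Finset.eq_univ_of_card
    rw [hcardn, hn]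
  have hD2ne : (D2 k).Nonempty := by
    rw [← Finset.card_pos, c2]
    omega
  have hD1ne : (D1 k).Nonempty := by
    rw [← Finset.card_pos]
    omega
  obtain ⟨a, ha⟩ := hD1ne
  obtain ⟨b, hb⟩ := hD2ne
  have hbA : b ∉ (↑(D1 k) : Set ι) := by
    simp only [Finset.coe_mem, Set.mem_setOf_eq, Finset.mem_coe]
    exact fun h => (hdisj k (le_of_lt hk2n)).forall_ne_finset h hb rfl
  obtain ⟨w⟩ := hconn.preconnected a b
  obtain ⟨x, y, hadj, hx, hy⟩ := cross_edge G (↑(D1 k)) w (by exact_mod_cast ha) hbA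
  have hyu : y ∈ D1 k ∪ D2 k := huniv ▸ Finset.mem_univ y
  have hy2 : y ∈ D2 k := by
    rcases Finset.mem_union.mp hyu with h | h
    · exact absurd (Finset.mem_coe.mpr h) hy
    · exact h
  exact horth k (le_of_lt hk2n) x (Finset.mem_coe.mp hx) y hy2 hadj
end

section
/- For the path graph on vertices α₁,…,αₙ (type Aₙ Dynkin diagram, edges αᵢ–αᵢ₊₁), and for every extended Dyck word ε₀ε₁⋯ε_{2n−1} of length 2n, there exists a sequence of pairs (Δ_{i,1}, Δ_{i,2}), i = 0,…,2n, of non-adjacent (orthogonal) subsets of vertices with Δ_{0,1} = {α₁,…,αₙ}, Δ_{0,2} = ∅, Δ_{2n,1} = ∅, Δ_{2n,2} = {α₁,…,αₙ}, such that at step i: if εᵢ = 0 then Δ_{i+1,1} ⊊ Δ_{i,1} with |Δ_{i,1}| − 1 = |Δ_{i+1,1}| and Δ_{i+1,2} = Δ_{i,2}; if εᵢ = 1 then Δ_{i+1,2} ⊋ Δ_{i,2} with |Δ_{i,2}| + 1 = |Δ_{i+1,2}| and Δ_{i+1,1} = Δ_{i,1}. -/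
/-- An extended Dyck word of length `2n`: a binary string (`false` = 0, `true` = 1)
with `n` zeros and `n` ones such that every nonempty initial segment of length `< 2n`
has strictly more zeros than ones. -/
def IsExtDyck (n : ℕ) (w : List Bool) : Prop :=
  w.length = 2 * n ∧ w.count false = n ∧ w.count true = n ∧
    ∀ k, 0 < k → k < 2 * n →
      (w.take k).count true < (w.take k).count false

/-- Adjacency in the type `Aₙ` Dynkin diagram (path graph on `Fin n`). -/
def PathAdj {n : ℕ} (a b : Fin n) : Prop :=
  (a : ℕ) + 1 = (b : ℕ) ∨ (b : ℕ) + 1 = (a : ℕ)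

private lemma card_filter_lt (n m : ℕ) (h : m ≤ n) :
    (Finset.univ.filter (fun a : Fin n => (a : ℕ) < m)).card = m := by
  have : Finset.univ.filter (fun a : Fin n => (a : ℕ) < m)
      = Finset.map (Fin.castLEEmb h) Finset.univ := by
    ext a
    simp only [Finset.mem_filter, Finset.mem_univ, true_and, Finset.mem_map,
      Finset.mem_univ, true_and]
    constructor
    · intro ha; exact ⟨⟨a, ha⟩, rfl⟩
    · rintro ⟨b, rfl⟩; exact b.2
  rw [this, Finset.card_map, Finset.card_univ, Fintype.card_fin]

private lemma card_filter_ge (n m : ℕ) (h : m ≤ n) :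
    (Finset.univ.filter (fun a : Fin n => m ≤ (a : ℕ))).card = n - m := by
  have key := Finset.card_filter_add_card_filter_not
    (s := (Finset.univ : Finset (Fin n))) (p := fun a : Fin n => (a : ℕ) < m)
  simp only [not_lt] at key
  rw [card_filter_lt n m h, Finset.card_univ, Fintype.card_fin] at key
  omega

/-- For the path graph on `n` vertices (type `Aₙ` diagram) and every
extended Dyck word `ε₀⋯ε_{2n-1}`, there is a chain of pairs `(D1 i, D2 i)` of
mutually non-adjacent disjoint vertex subsets, starting at `(Δ, ∅)` and ending at
`(∅, Δ)`, where at step `i` the set `D1` loses exactly one element if `εᵢ = 0`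
and `D2` gains exactly one element if `εᵢ = 1`. -/
theorem stmt18 (n : ℕ) (hn : 1 ≤ n) (w : List Bool) (hw : IsExtDyck n w) :
    ∃ D1 D2 : ℕ → Finset (Fin n),
      D1 0 = Finset.univ ∧ D2 0 = ∅ ∧
      D1 (2 * n) = ∅ ∧ D2 (2 * n) = Finset.univ ∧
      (∀ i ≤ 2 * n, ∀ a ∈ D1 i, ∀ b ∈ D2 i, a ≠ b ∧ ¬ PathAdj a b) ∧
      (∀ i < 2 * n,
        (w.getD i false = false → D1 (i + 1) ⊆ D1 i ∧
          (D1 (i + 1)).card + 1 = (D1 i).card ∧ D2 (i + 1) = D2 i) ∧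
        (w.getD i false = true → D2 i ⊆ D2 (i + 1) ∧
          (D2 i).card + 1 = (D2 (i + 1)).card ∧ D1 (i + 1) = D1 i)) := by
  obtain ⟨hlen, hcf, hct, hdyck⟩ := hw
  set z : ℕ → ℕ := fun i => (w.take i).count false with hz
  set o : ℕ → ℕ := fun i => (w.take i).count true with ho
  have hzle : ∀ i, z i ≤ n := fun i => by
    have : (w.take i).count false ≤ w.count false := (w.take_sublist i).count_le false
    simpa [hcf] using this
  have hole : ∀ i, o i ≤ n := fun i => by
    have : (w.take i).count true ≤ w.count true := (w.take_sublist i).count_le true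
    simpa [hct] using this
  refine ⟨fun i => Finset.univ.filter (fun a => (a : ℕ) < n - z i),
          fun i => Finset.univ.filter (fun a => n - o i ≤ (a : ℕ)), ?_, ?_, ?_, ?_, ?_, ?_⟩
  · simp [hz]
  · ext a; simp only [Finset.mem_filter, Finset.mem_univ, true_and, Finset.notMem_empty,
      iff_false, not_le, ho]
    simpa using a.2
  · have : z (2 * n) = n := by simp [hz, ← hlen, hcf]
    ext a; simp [this]
  · have : o (2 * n) = n := by simp [ho, ← hlen, hct]
    ext a; simp [this]
  · intro i hi a ha b hb
    simp only [Finset.mem_filter, Finset.mem_univ, true_and] at ha hb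
    have hbn := b.2
    have han := a.2
    have hkey : (a : ℕ) + 2 ≤ (b : ℕ) := by
      rcases Nat.eq_zero_or_pos i with rfl | hipos
      · simp [ho] at hb; omega
      rcases eq_or_lt_of_le hi with rfl | hi'
      · have : z (2 * n) = n := by simp [hz, ← hlen, hcf]
        rw [this] at ha; omega
      · have := hdyck i hipos hi'
        have hz1 := hzle i
        simp only [hz, ho] at *
        omega
    constructor
    · intro hab; rw [hab] at hkey; omega
    · rintro (h | h) <;> omega
  · intro i hi
    have hiw : i < w.length := by omega
    have htake : w.take (i + 1) = w.take i ++ [w[i]] := by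
      rw [List.take_succ]; simp [List.getElem?_eq_getElem hiw]
    have hgetD : w.getD i false = w[i] := by
      simp [List.getD_eq_getElem?_getD, List.getElem?_eq_getElem hiw]
    constructor
    · intro hfalse
      have hget : w[i] = false := by rw [← hgetD]; exact hfalse
      have hzs : z (i + 1) = z i + 1 := by
        simp only [hz, ho]; rw [htake, List.count_append]; simp [hget]
      have hos : o (i + 1) = o i := by
        simp only [hz, ho]; rw [htake, List.count_append]; simp [hget]
      have hzlt : z i < n := by
        have hsplit : w = w.take i ++ w.drop i := (w.take_append_drop i).symm
        have hdrop : w.drop i = w[i] :: w.drop (i + 1) :=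
          (List.drop_eq_getElem_cons hiw)
        have : w.count false = z i + (w.drop i).count false := by
          conv_lhs => rw [hsplit]
          rw [List.count_append]
        rw [hdrop, hget] at this
        simp [List.count_cons] at this
        omega
      refine ⟨?_, ?_, ?_⟩
      · intro a ha
        simp only [Finset.mem_filter, Finset.mem_univ, true_and] at ha ⊢
        omega
      · rw [card_filter_lt n _ (by omega), card_filter_lt n _ (by omega)]
        omega
      · simp [hos]
    · intro htrue
      have hget : w[i] = true := by rw [← hgetD]; exact htrue
      have hos : o (i + 1) = o i + 1 := by
        simp only [hz, ho]; rw [htake, List.count_append]; simp [hget]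
      have hzs : z (i + 1) = z i := by
        simp only [hz, ho]; rw [htake, List.count_append]; simp [hget]
      have holt : o i < n := by
        have hsplit : w = w.take i ++ w.drop i := (w.take_append_drop i).symm
        have hdrop : w.drop i = w[i] :: w.drop (i + 1) :=
          (List.drop_eq_getElem_cons hiw)
        have : w.count true = o i + (w.drop i).count true := by
          conv_lhs => rw [hsplit]
          rw [List.count_append]
        rw [hdrop, hget] at this
        simp [List.count_cons] at this
        omega
      refine ⟨?_, ?_, ?_⟩
      · intro a ha
        simp only [Finset.mem_filter, Finset.mem_univ, true_and] at ha ⊢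
        omega
      · rw [card_filter_ge n _ (by omega), card_filter_ge n _ (by omega)]
        omega
      · simp [hzs]
end

section
/- Fix natural numbers a, b ≥ 0. The linear order ω + ω + [a] + ω* + ω + [b] + ω* + ω* is not order-isomorphic to ω + ω + [a'] + ω* + ω + [b'] + ω* + ω* unless a = a' and b = b'. -/
/-- The linear order `ω + ω + [a] + ω* + ω + [b] + ω* + ω*` (lexicographic ordered sum). -/
abbrev OT (a b : ℕ) :=
  ℕ ⊕ₗ ℕ ⊕ₗ Fin a ⊕ₗ ℕᵒᵈ ⊕ₗ ℕ ⊕ₗ Fin b ⊕ₗ ℕᵒᵈ ⊕ₗ ℕᵒᵈ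

namespace Stmt19

open Sum Set

/-- The class of `x`: elements at finite distance from `x`. -/
def cls {α : Type*} [LinearOrder α] (x : α) : Set α :=
  {y | (Set.Icc x y ∪ Set.Icc y x).Finite}

/-- There are three strictly increasing "jumps" below `x`. -/
def P3 {α : Type*} [LinearOrder α] (x : α) : Prop :=
  ∃ y1 y2 y3 : α, y1 < y2 ∧ y2 < y3 ∧ y3 < x ∧
    (Set.Ioo y1 y2).Infinite ∧ (Set.Ioo y2 y3).Infinite ∧ (Set.Ioo y3 x).Infinite

def GoodA {α : Type*} [LinearOrder α] (x : α) : Prop := (cls x).Finite ∧ ¬ P3 x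
def GoodB {α : Type*} [LinearOrder α] (x : α) : Prop := (cls x).Finite ∧ P3 x

variable {a b : ℕ}

def e1 (n : ℕ) : OT a b := toLex (inl n)
def e2 (n : ℕ) : OT a b := toLex (inr (toLex (inl n)))
def e3 (i : Fin a) : OT a b := toLex (inr (toLex (inr (toLex (inl i)))))
def e4 (n : ℕ) : OT a b :=
  toLex (inr (toLex (inr (toLex (inr (toLex (inl (OrderDual.toDual n))))))))
def e5 (n : ℕ) : OT a b :=
  toLex (inr (toLex (inr (toLex (inr (toLex (inr (toLex (inl n)))))))))
def e6 (i : Fin b) : OT a b :=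
  toLex (inr (toLex (inr (toLex (inr (toLex (inr (toLex (inr (toLex (inl i)))))))))))
def e7 (n : ℕ) : OT a b :=
  toLex (inr (toLex (inr (toLex (inr (toLex (inr (toLex (inr (toLex (inr
    (toLex (inl (OrderDual.toDual n))))))))))))))
def e8 (n : ℕ) : OT a b :=
  toLex (inr (toLex (inr (toLex (inr (toLex (inr (toLex (inr (toLex (inr
    (toLex (inr (OrderDual.toDual n))))))))))))))

/-- The block index (condensation class) of an element. -/
def B : OT a b → ℕ
  | Sum.inl _ => 0
  | Sum.inr (Sum.inl _) => 1
  | Sum.inr (Sum.inr (Sum.inl _)) => 2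
  | Sum.inr (Sum.inr (Sum.inr (Sum.inl _))) => 3
  | Sum.inr (Sum.inr (Sum.inr (Sum.inr (Sum.inl _)))) => 3
  | Sum.inr (Sum.inr (Sum.inr (Sum.inr (Sum.inr (Sum.inl _))))) => 4
  | Sum.inr (Sum.inr (Sum.inr (Sum.inr (Sum.inr (Sum.inr (Sum.inl _)))))) => 5
  | Sum.inr (Sum.inr (Sum.inr (Sum.inr (Sum.inr (Sum.inr (Sum.inr _)))))) => 6

/-- The position of an element within its block. -/
def N : OT a b → ℤ
  | Sum.inl n => n
  | Sum.inr (Sum.inl n) => n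
  | Sum.inr (Sum.inr (Sum.inl i)) => (i : ℕ)
  | Sum.inr (Sum.inr (Sum.inr (Sum.inl n))) => -((OrderDual.ofDual n : ℕ) + 1)
  | Sum.inr (Sum.inr (Sum.inr (Sum.inr (Sum.inl n)))) => n
  | Sum.inr (Sum.inr (Sum.inr (Sum.inr (Sum.inr (Sum.inl i))))) => (i : ℕ)
  | Sum.inr (Sum.inr (Sum.inr (Sum.inr (Sum.inr (Sum.inr (Sum.inl n)))))) => -(OrderDual.ofDual n : ℕ)
  | Sum.inr (Sum.inr (Sum.inr (Sum.inr (Sum.inr (Sum.inr (Sum.inr n)))))) => -(OrderDual.ofDual n : ℕ)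

@[simp] lemma B_e1 (n : ℕ) : B (e1 (a := a) (b := b) n) = 0 := rfl
@[simp] lemma B_e2 (n : ℕ) : B (e2 (a := a) (b := b) n) = 1 := rfl
@[simp] lemma B_e3 (i : Fin a) : B (e3 (b := b) i) = 2 := rfl
@[simp] lemma B_e4 (n : ℕ) : B (e4 (a := a) (b := b) n) = 3 := rfl
@[simp] lemma B_e5 (n : ℕ) : B (e5 (a := a) (b := b) n) = 3 := rfl
@[simp] lemma B_e6 (i : Fin b) : B (e6 (a := a) i) = 4 := rfl
@[simp] lemma B_e7 (n : ℕ) : B (e7 (a := a) (b := b) n) = 5 := rfl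
@[simp] lemma B_e8 (n : ℕ) : B (e8 (a := a) (b := b) n) = 6 := rfl

@[simp] lemma N_e1 (n : ℕ) : N (e1 (a := a) (b := b) n) = n := rfl
@[simp] lemma N_e2 (n : ℕ) : N (e2 (a := a) (b := b) n) = n := rfl
@[simp] lemma N_e3 (i : Fin a) : N (e3 (b := b) i) = (i : ℕ) := rfl
@[simp] lemma N_e4 (n : ℕ) : N (e4 (a := a) (b := b) n) = -(n + 1) := rfl
@[simp] lemma N_e5 (n : ℕ) : N (e5 (a := a) (b := b) n) = n := rfl
@[simp] lemma N_e6 (i : Fin b) : N (e6 (a := a) i) = (i : ℕ) := rfl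
@[simp] lemma N_e7 (n : ℕ) : N (e7 (a := a) (b := b) n) = -n := rfl
@[simp] lemma N_e8 (n : ℕ) : N (e8 (a := a) (b := b) n) = -n := rfl

lemma rep (x : OT a b) :
    (∃ n, x = e1 n) ∨ (∃ n, x = e2 n) ∨ (∃ i, x = e3 i) ∨ (∃ n, x = e4 n) ∨
    (∃ n, x = e5 n) ∨ (∃ i, x = e6 i) ∨ (∃ n, x = e7 n) ∨ (∃ n, x = e8 n) := by
  rcases x with n | n | i | n | n | i | n | n
  · exact Or.inl ⟨n, rfl⟩
  · exact Or.inr <| Or.inl ⟨n, rfl⟩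
  · exact Or.inr <| Or.inr <| Or.inl ⟨i, rfl⟩
  · exact Or.inr <| Or.inr <| Or.inr <| Or.inl ⟨OrderDual.ofDual n, rfl⟩
  · exact Or.inr <| Or.inr <| Or.inr <| Or.inr <| Or.inl ⟨n, rfl⟩
  · exact Or.inr <| Or.inr <| Or.inr <| Or.inr <| Or.inr <| Or.inl ⟨i, rfl⟩
  · exact Or.inr <| Or.inr <| Or.inr <| Or.inr <| Or.inr <| Or.inr <| Or.inl
      ⟨OrderDual.ofDual n, rfl⟩
  · exact Or.inr <| Or.inr <| Or.inr <| Or.inr <| Or.inr <| Or.inr <| Or.inr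
      ⟨OrderDual.ofDual n, rfl⟩

lemma lt_iff (x y : OT a b) : x < y ↔ B x < B y ∨ (B x = B y ∧ N x < N y) := by
  rcases rep x with ⟨n, rfl⟩ | ⟨n, rfl⟩ | ⟨i, rfl⟩ | ⟨n, rfl⟩ | ⟨n, rfl⟩ | ⟨i, rfl⟩ |
      ⟨n, rfl⟩ | ⟨n, rfl⟩ <;>
    rcases rep y with ⟨m, rfl⟩ | ⟨m, rfl⟩ | ⟨j, rfl⟩ | ⟨m, rfl⟩ | ⟨m, rfl⟩ | ⟨j, rfl⟩ |
      ⟨m, rfl⟩ | ⟨m, rfl⟩ <;>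
    simp only [B_e1, B_e2, B_e3, B_e4, B_e5, B_e6, B_e7, B_e8,
      N_e1, N_e2, N_e3, N_e4, N_e5, N_e6, N_e7, N_e8] <;>
    simp [e1, e2, e3, e4, e5, e6, e7, e8, Sum.Lex.toLex_lt_toLex] <;>
    try omega

lemma NBinj {x y : OT a b} (hB : B x = B y) (hN : N x = N y) : x = y := by
  rcases rep x with ⟨n, rfl⟩ | ⟨n, rfl⟩ | ⟨i, rfl⟩ | ⟨n, rfl⟩ | ⟨n, rfl⟩ | ⟨i, rfl⟩ |
      ⟨n, rfl⟩ | ⟨n, rfl⟩ <;>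
    rcases rep y with ⟨m, rfl⟩ | ⟨m, rfl⟩ | ⟨j, rfl⟩ | ⟨m, rfl⟩ | ⟨m, rfl⟩ | ⟨j, rfl⟩ |
      ⟨m, rfl⟩ | ⟨m, rfl⟩ <;>
    simp only [B_e1, B_e2, B_e3, B_e4, B_e5, B_e6, B_e7, B_e8,
      N_e1, N_e2, N_e3, N_e4, N_e5, N_e6, N_e7, N_e8] at hB hN <;>
    first
      | omega
      | (refine congrArg _ ?_; omega)
      | (refine congrArg _ (Fin.ext ?_); omega)

lemma B_le (x : OT a b) : B x ≤ 6 := by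
  rcases x with n | n | i | n | n | i | n | n <;> simp [B]

lemma B_mono {x y : OT a b} (h : x ≤ y) : B x ≤ B y := by
  rcases eq_or_lt_of_le h with rfl | h
  · exact le_rfl
  · rcases (lt_iff x y).1 h with h' | ⟨h', _⟩ <;> omega

lemma lt_of_B_lt {x y : OT a b} (h : B x < B y) : x < y :=
  (lt_iff x y).2 (Or.inl h)

lemma lt_of_N_lt {x y : OT a b} (hB : B x = B y) (h : N x < N y) : x < y :=
  (lt_iff x y).2 (Or.inr ⟨hB, h⟩)

lemma N_mono {x y : OT a b} (h : x ≤ y) (hB : B x = B y) : N x ≤ N y := by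
  rcases eq_or_lt_of_le h with rfl | h
  · exact le_rfl
  · rcases (lt_iff x y).1 h with h' | ⟨_, h'⟩ <;> omega

lemma FIN {x y : OT a b} (hB : B x = B y) : (Set.Icc x y).Finite := by
  apply Set.Finite.of_finite_image (f := N)
  · apply (Set.finite_Icc (N x) (N y)).subset
    rintro _ ⟨z, ⟨hz1, hz2⟩, rfl⟩
    have h1 : B x ≤ B z := B_mono hz1
    have h2 : B z ≤ B y := B_mono hz2
    constructor
    · exact N_mono hz1 (by omega)
    · exact N_mono hz2 (by omega)
  · intro z hz w hw hzw
    have h1 : B x ≤ B z := B_mono hz.1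
    have h2 : B z ≤ B y := B_mono hz.2
    have h3 : B x ≤ B w := B_mono hw.1
    have h4 : B w ≤ B y := B_mono hw.2
    exact NBinj (by omega) hzw

lemma FINu {x y : OT a b} (hB : B x = B y) : (Set.Icc x y ∪ Set.Icc y x).Finite :=
  (FIN hB).union (FIN hB.symm)

lemma infinite_family {s : Set (OT a b)} (f : ℕ → OT a b)
    (hinj : Function.Injective f) (hmem : ∀ n, f n ∈ s) : s.Infinite :=
  Set.infinite_of_injective_forall_mem hinj hmem

lemma inj_of_N (f : ℕ → OT a b) (h : ∀ n, N (f n) = n ∨ ∀ m, N (f m) = -(m + 1)) :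
    True := trivial

lemma INF {x y : OT a b} (hxy : x < y) (hB : B x < B y) : (Set.Ioo x y).Infinite := by
  have hy6 : B y ≤ 6 := B_le y
  rcases rep x with ⟨p, rfl⟩ | ⟨p, rfl⟩ | ⟨i, rfl⟩ | ⟨p, rfl⟩ | ⟨p, rfl⟩ | ⟨i, rfl⟩ |
      ⟨p, rfl⟩ | ⟨p, rfl⟩
  · -- x = e1 p
    refine infinite_family (fun n => e1 (p + 1 + n)) ?_ ?_
    · intro u v h; have := congrArg N h; simp at this; omega
    · intro n
      exact ⟨lt_of_N_lt (by simp) (by simp; omega), lt_of_B_lt (by simpa using hB)⟩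
  · refine infinite_family (fun n => e2 (p + 1 + n)) ?_ ?_
    · intro u v h; have := congrArg N h; simp at this; omega
    · intro n
      exact ⟨lt_of_N_lt (by simp) (by simp; omega), lt_of_B_lt (by simpa using hB)⟩
  · -- x = e3 i, B y ≥ 3
    simp only [B_e3] at hB
    rcases rep y with ⟨q, rfl⟩ | ⟨q, rfl⟩ | ⟨j, rfl⟩ | ⟨q, rfl⟩ | ⟨q, rfl⟩ | ⟨j, rfl⟩ |
        ⟨q, rfl⟩ | ⟨q, rfl⟩
    · simp at hB
    · simp at hB
    · simp at hB
    · refine infinite_family (fun n => e4 (q + 1 + n)) ?_ ?_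
      · intro u v h; have := congrArg N h; simp at this; omega
      · intro n
        exact ⟨lt_of_B_lt (by simp), lt_of_N_lt (by simp) (by simp; omega)⟩
    · refine infinite_family (fun n => e4 n) ?_ ?_
      · intro u v h; have := congrArg N h; simp at this; omega
      · intro n
        exact ⟨lt_of_B_lt (by simp), lt_of_N_lt (by simp) (by simp; omega)⟩
    · refine infinite_family (fun n => e4 n) ?_ ?_
      · intro u v h; have := congrArg N h; simp at this; omega
      · intro n
        exact ⟨lt_of_B_lt (by simp), lt_of_B_lt (by simp)⟩
    · refine infinite_family (fun n => e4 n) ?_ ?_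
      · intro u v h; have := congrArg N h; simp at this; omega
      · intro n
        exact ⟨lt_of_B_lt (by simp), lt_of_B_lt (by simp)⟩
    · refine infinite_family (fun n => e4 n) ?_ ?_
      · intro u v h; have := congrArg N h; simp at this; omega
      · intro n
        exact ⟨lt_of_B_lt (by simp), lt_of_B_lt (by simp)⟩
  · -- x = e4 p, B y > 3
    refine infinite_family (fun n => e5 n) ?_ ?_
    · intro u v h; have := congrArg N h; simp at this; omega
    · intro n
      exact ⟨lt_of_N_lt (by simp) (by simp; omega), lt_of_B_lt (by simpa using hB)⟩
  · refine infinite_family (fun n => e5 (p + 1 + n)) ?_ ?_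
    · intro u v h; have := congrArg N h; simp at this; omega
    · intro n
      exact ⟨lt_of_N_lt (by simp) (by simp; omega), lt_of_B_lt (by simpa using hB)⟩
  · -- x = e6 i, B y ≥ 5
    simp only [B_e6] at hB
    rcases rep y with ⟨q, rfl⟩ | ⟨q, rfl⟩ | ⟨j, rfl⟩ | ⟨q, rfl⟩ | ⟨q, rfl⟩ | ⟨j, rfl⟩ |
        ⟨q, rfl⟩ | ⟨q, rfl⟩
    · simp at hB
    · simp at hB
    · simp at hB
    · simp at hB
    · simp at hB
    · simp at hB
    · refine infinite_family (fun n => e7 (q + 1 + n)) ?_ ?_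
      · intro u v h; have := congrArg N h; simp at this; omega
      · intro n
        exact ⟨lt_of_B_lt (by simp), lt_of_N_lt (by simp) (by simp; omega)⟩
    · refine infinite_family (fun n => e7 n) ?_ ?_
      · intro u v h; have := congrArg N h; simp at this; omega
      · intro n
        exact ⟨lt_of_B_lt (by simp), lt_of_B_lt (by simp)⟩
  · -- x = e7 p, B y = 6
    simp only [B_e7] at hB
    rcases rep y with ⟨q, rfl⟩ | ⟨q, rfl⟩ | ⟨j, rfl⟩ | ⟨q, rfl⟩ | ⟨q, rfl⟩ | ⟨j, rfl⟩ |
        ⟨q, rfl⟩ | ⟨q, rfl⟩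
    · simp at hB
    · simp at hB
    · simp at hB
    · simp at hB
    · simp at hB
    · simp at hB
    · simp at hB
    · refine infinite_family (fun n => e8 (q + 1 + n)) ?_ ?_
      · intro u v h; have := congrArg N h; simp at this; omega
      · intro n
        exact ⟨lt_of_B_lt (by simp), lt_of_N_lt (by simp) (by simp; omega)⟩
  · -- x = e8 p : impossible
    simp only [B_e8] at hB; omega

lemma INFu {x y : OT a b} (hB : B x ≠ B y) : (Set.Icc x y ∪ Set.Icc y x).Infinite := by
  rcases lt_trichotomy x y with h | rfl | h
  · have hB' : B x < B y := lt_of_le_of_ne (B_mono h.le) hB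
    exact (INF h hB').mono (Set.Ioo_subset_Icc_self.trans Set.subset_union_left)
  · exact absurd rfl hB
  · have hB' : B y < B x := lt_of_le_of_ne (B_mono h.le) (Ne.symm hB)
    exact (INF h hB').mono (Set.Ioo_subset_Icc_self.trans Set.subset_union_right)

lemma cls_eq (x : OT a b) : cls x = {y | B y = B x} := by
  ext y
  simp only [cls, Set.mem_setOf_eq]
  constructor
  · intro hy
    by_contra hne
    exact (INFu (fun h => hne h.symm)) hy
  · intro hy
    exact FINu hy.symm

lemma B_eq_two {x : OT a b} (h : B x = 2) : ∃ i, x = e3 i := by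
  rcases rep x with ⟨n, rfl⟩ | ⟨n, rfl⟩ | ⟨i, rfl⟩ | ⟨n, rfl⟩ | ⟨n, rfl⟩ | ⟨i, rfl⟩ |
      ⟨n, rfl⟩ | ⟨n, rfl⟩ <;> simp_all

lemma B_eq_four {x : OT a b} (h : B x = 4) : ∃ i, x = e6 i := by
  rcases rep x with ⟨n, rfl⟩ | ⟨n, rfl⟩ | ⟨i, rfl⟩ | ⟨n, rfl⟩ | ⟨n, rfl⟩ | ⟨i, rfl⟩ |
      ⟨n, rfl⟩ | ⟨n, rfl⟩ <;> simp_all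

lemma cls_finite_iff (x : OT a b) : (cls x).Finite ↔ B x = 2 ∨ B x = 4 := by
  rw [cls_eq]
  constructor
  · intro hfin
    by_contra hne
    push_neg at hne
    have hx6 := B_le x
    -- B x ∈ {0, 1, 3, 5, 6}
    have : ({y : OT a b | B y = B x}).Infinite := by
      interval_cases h : B x
      · exact infinite_family (fun n => e1 n)
          (fun u v h => by have := congrArg N h; simpa using this) (fun n => by simp)
      · exact infinite_family (fun n => e2 n)
          (fun u v h => by have := congrArg N h; simpa using this) (fun n => by simp)
      · omega
      · exact infinite_family (fun n => e5 n)
          (fun u v h => by have := congrArg N h; simpa using this) (fun n => by simp)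
      · omega
      · exact infinite_family (fun n => e7 n)
          (fun u v h => by have := congrArg N h; simp at this; omega) (fun n => by simp)
      · exact infinite_family (fun n => e8 n)
          (fun u v h => by have := congrArg N h; simp at this; omega) (fun n => by simp)
    exact this hfin
  · intro h
    rcases h with h | h
    · apply (Set.finite_range (e3 (a := a) (b := b))).subset
      intro y hy
      obtain ⟨i, rfl⟩ := B_eq_two (by rw [Set.mem_setOf_eq, h] at hy; exact hy)
      exact ⟨i, rfl⟩
    · apply (Set.finite_range (e6 (a := a) (b := b))).subset
      intro y hy
      obtain ⟨i, rfl⟩ := B_eq_four (by rw [Set.mem_setOf_eq, h] at hy; exact hy)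
      exact ⟨i, rfl⟩

lemma Ioo_finite_of_B_eq {x y : OT a b} (h : B x = B y) : (Set.Ioo x y).Finite :=
  (FIN h).subset Set.Ioo_subset_Icc_self

lemma not_P3_of_B_two {x : OT a b} (hx : B x = 2) : ¬ P3 x := by
  rintro ⟨y1, y2, y3, h12, h23, h3x, i12, i23, i3x⟩
  have hB3 : B y3 ≠ B x := fun h => i3x (Ioo_finite_of_B_eq h)
  have hB3' : B y3 ≤ B x := B_mono h3x.le
  have hB2 : B y2 ≠ B y3 := fun h => i23 (Ioo_finite_of_B_eq h)
  have hB2' : B y2 ≤ B y3 := B_mono h23.le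
  have hB1 : B y1 ≠ B y2 := fun h => i12 (Ioo_finite_of_B_eq h)
  have hB1' : B y1 ≤ B y2 := B_mono h12.le
  omega

lemma P3_of_B_four {x : OT a b} (hx : B x = 4) : P3 x := by
  refine ⟨e1 0, e2 0, e4 0, lt_of_B_lt (by simp), lt_of_B_lt (by simp),
    lt_of_B_lt (by simp [hx]), ?_, ?_, ?_⟩
  · exact INF (lt_of_B_lt (by simp)) (by simp)
  · exact INF (lt_of_B_lt (by simp)) (by simp)
  · exact INF (lt_of_B_lt (by simp [hx])) (by simp [hx])

lemma goodA_iff (x : OT a b) : GoodA x ↔ B x = 2 := by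
  constructor
  · rintro ⟨hfin, hnp3⟩
    rcases (cls_finite_iff x).1 hfin with h | h
    · exact h
    · exact absurd (P3_of_B_four h) hnp3
  · intro h
    exact ⟨(cls_finite_iff x).2 (Or.inl h), not_P3_of_B_two h⟩

lemma goodB_iff (x : OT a b) : GoodB x ↔ B x = 4 := by
  constructor
  · rintro ⟨hfin, hp3⟩
    rcases (cls_finite_iff x).1 hfin with h | h
    · exact absurd hp3 (not_P3_of_B_two h)
    · exact h
  · intro h
    exact ⟨(cls_finite_iff x).2 (Or.inr h), P3_of_B_four h⟩

lemma card_goodA : Nat.card {x : OT a b // GoodA x} = a := by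
  have : {x : OT a b // GoodA x} ≃ Fin a := by
    refine Equiv.symm (Equiv.ofBijective (fun i => ⟨e3 i, (goodA_iff _).2 (by simp)⟩) ?_)
    constructor
    · intro i j h
      have h' : e3 (a := a) (b := b) i = e3 j := congrArg Subtype.val h
      have := congrArg N h'
      simp at this
      exact Fin.ext this
    · rintro ⟨x, hx⟩
      obtain ⟨i, rfl⟩ := B_eq_two ((goodA_iff x).1 hx)
      exact ⟨i, rfl⟩
  rw [Nat.card_congr this, Nat.card_eq_fintype_card, Fintype.card_fin]

lemma card_goodB : Nat.card {x : OT a b // GoodB x} = b := by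
  have : {x : OT a b // GoodB x} ≃ Fin b := by
    refine Equiv.symm (Equiv.ofBijective (fun i => ⟨e6 i, (goodB_iff _).2 (by simp)⟩) ?_)
    constructor
    · intro i j h
      have h' : e6 (a := a) (b := b) i = e6 j := congrArg Subtype.val h
      have := congrArg N h'
      simp at this
      exact Fin.ext this
    · rintro ⟨x, hx⟩
      obtain ⟨i, rfl⟩ := B_eq_four ((goodB_iff x).1 hx)
      exact ⟨i, rfl⟩
  rw [Nat.card_congr this, Nat.card_eq_fintype_card, Fintype.card_fin]

section Invariance

variable {α β : Type*} [LinearOrder α] [LinearOrder β] (f : α ≃o β)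

lemma image_icc2 (x y : α) :
    f '' (Set.Icc x y ∪ Set.Icc y x) = Set.Icc (f x) (f y) ∪ Set.Icc (f y) (f x) := by
  rw [Set.image_union, f.image_Icc, f.image_Icc]

lemma icc2_finite_iff (x y : α) :
    (Set.Icc (f x) (f y) ∪ Set.Icc (f y) (f x)).Finite ↔
      (Set.Icc x y ∪ Set.Icc y x).Finite := by
  rw [← image_icc2]
  exact ⟨fun h => Set.Finite.of_finite_image h (f.injective.injOn),
    fun h => h.image _⟩

lemma Ioo_infinite_iff (x y : α) :
    (Set.Ioo (f x) (f y)).Infinite ↔ (Set.Ioo x y).Infinite := by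
  rw [← f.image_Ioo]
  constructor
  · intro h
    intro hfin
    exact h (hfin.image _)
  · intro h hfin
    exact h (Set.Finite.of_finite_image hfin (f.injective.injOn))

lemma cls_finite_iso (x : α) : (cls (f x)).Finite ↔ (cls x).Finite := by
  have himg : cls (f x) = f '' cls x := by
    ext z
    constructor
    · intro hz
      refine ⟨f.symm z, ?_, f.apply_symm_apply z⟩
      have : (Set.Icc (f x) (f (f.symm z)) ∪ Set.Icc (f (f.symm z)) (f x)).Finite := by
        rwa [f.apply_symm_apply]
      exact (icc2_finite_iff f x (f.symm z)).1 this
    · rintro ⟨w, hw, rfl⟩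
      exact (icc2_finite_iff f x w).2 hw
  rw [himg]
  exact ⟨fun h => Set.Finite.of_finite_image h (f.injective.injOn),
    fun h => h.image _⟩

lemma P3_iso (x : α) : P3 (f x) ↔ P3 x := by
  constructor
  · rintro ⟨y1, y2, y3, h12, h23, h3x, i12, i23, i3x⟩
    refine ⟨f.symm y1, f.symm y2, f.symm y3, f.symm.strictMono h12, f.symm.strictMono h23,
      ?_, ?_, ?_, ?_⟩
    · have := f.symm.strictMono h3x
      rwa [f.symm_apply_apply] at this
    · rw [← Ioo_infinite_iff f]
      simpa using i12
    · rw [← Ioo_infinite_iff f]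
      simpa using i23
    · rw [← Ioo_infinite_iff f]
      simpa [f.apply_symm_apply] using i3x
  · rintro ⟨y1, y2, y3, h12, h23, h3x, i12, i23, i3x⟩
    exact ⟨f y1, f y2, f y3, f.strictMono h12, f.strictMono h23, f.strictMono h3x,
      (Ioo_infinite_iff f _ _).2 i12, (Ioo_infinite_iff f _ _).2 i23,
      (Ioo_infinite_iff f _ _).2 i3x⟩

lemma goodA_iso (x : α) : GoodA (f x) ↔ GoodA x := by
  unfold GoodA
  rw [cls_finite_iso, P3_iso]

lemma goodB_iso (x : α) : GoodB (f x) ↔ GoodB x := by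
  unfold GoodB
  rw [cls_finite_iso, P3_iso]

end Invariance

end Stmt19

/-- `ω + ω + [a] + ω* + ω + [b] + ω* + ω*` is order-isomorphic to
`ω + ω + [a'] + ω* + ω + [b'] + ω* + ω*` only if `a = a'` and `b = b'`. -/
theorem stmt19 (a b a' b' : ℕ) (h : Nonempty (OT a b ≃o OT a' b')) :
    a = a' ∧ b = b' := by
  obtain ⟨f⟩ := h
  have eA : {x : OT a b // Stmt19.GoodA x} ≃ {y : OT a' b' // Stmt19.GoodA y} :=
    Equiv.subtypeEquiv f.toEquiv (fun x => (Stmt19.goodA_iso f x).symm)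
  have eB : {x : OT a b // Stmt19.GoodB x} ≃ {y : OT a' b' // Stmt19.GoodB y} :=
    Equiv.subtypeEquiv f.toEquiv (fun x => (Stmt19.goodB_iso f x).symm)
  constructor
  · rw [← Stmt19.card_goodA (a := a) (b := b), ← Stmt19.card_goodA (a := a') (b := b')]
    exact Nat.card_congr eA
  · rw [← Stmt19.card_goodB (a := a) (b := b), ← Stmt19.card_goodB (a := a') (b := b')]
    exact Nat.card_congr eB
end
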